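/- arXiv:0803.0225 — 4 statements merged into one kernel-verified Lean document; each statement's English description precedes it below -/
import Mathlib

section
/- The number of forests consisting of (k+1) rooted b-uniform hypertrees with s hyperedges and n = s(b-1)+k+1 labeled vertices equals C(n, k+1) · (k+1) · ((n-k-1)! / (((b-1)!)^s · s!)) · n^{s-1}. -/
/-- Two vertices are linked if some hyperedge contains both. -/
def link {n : ℕ} (E : Finset (Finset (Fin n))) (x y : Fin n) : Prop :=
  ∃ e ∈ E, x ∈ e ∧ y ∈ e

/-- Reachability in the hypergraph. -/
def reaches {n : ℕ} (E : Finset (Finset (Fin n))) (x y : Fin n) : Prop :=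
  Relation.ReflTransGen (link E) x y

/-- All hyperedges have exactly `b` vertices. -/
def Uniform {n : ℕ} (b : ℕ) (E : Finset (Finset (Fin n))) : Prop :=
  ∀ e ∈ E, e.card = b

/-- Number of hyperedges lying inside the connected component of `v`. -/
noncomputable def compEdges {n : ℕ} (E : Finset (Finset (Fin n))) (v : Fin n) : ℕ :=
  ((E : Set (Finset (Fin n))) ∩ {e | ∀ x ∈ e, reaches E v x}).ncard

/-- Number of vertices in the connected component of `v`. -/
noncomputable def compSize {n : ℕ} (E : Finset (Finset (Fin n))) (v : Fin n) : ℕ :=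
  {w | reaches E v w}.ncard

/-- `(E, R)` is a forest of rooted `b`-uniform hypertrees: every hyperedge has `b`
vertices, every vertex is reachable from exactly one root, and each connected
component is a hypertree (excess `-1`, i.e. `(b-1)·#edges + 1 = #vertices`). -/
noncomputable def IsForestRHT {n : ℕ} (b : ℕ) (E : Finset (Finset (Fin n)))
    (R : Finset (Fin n)) : Prop :=
  Uniform b E ∧ (∀ v : Fin n, ∃! r, r ∈ R ∧ reaches E r v) ∧
    (∀ r ∈ R, (b - 1) * compEdges E r + 1 = compSize E r)

namespace HT
variable {n b : ℕ} {E E' : Finset (Finset (Fin n))} {x y z v w : Fin n}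

lemma link_symm (h : link E x y) : link E y x := by
  obtain ⟨e, he, hx, hy⟩ := h; exact ⟨e, he, hy, hx⟩

lemma reaches_refl (x : Fin n) : reaches E x x := Relation.ReflTransGen.refl

lemma reaches_trans (h : reaches E x y) (h' : reaches E y z) : reaches E x z := h.trans h'

lemma reaches_symm (h : reaches E x y) : reaches E y x := by
  induction h with
  | refl => exact reaches_refl x
  | tail _ hl ih => exact reaches_trans (Relation.ReflTransGen.single (link_symm hl)) ih

lemma reaches_of_link (h : link E x y) : reaches E x y := Relation.ReflTransGen.single h

lemma reaches_mono (hE : E ⊆ E') (h : reaches E x y) : reaches E' x y := by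
  induction h with
  | refl => exact reaches_refl x
  | tail _ hl ih => exact ih.tail (by obtain ⟨e, he, h1, h2⟩ := hl; exact ⟨e, hE he, h1, h2⟩)

lemma reaches_erase_decomp (f : Finset (Fin n)) (h : reaches E x y) :
    reaches (E.erase f) x y ∨ ∃ w ∈ f, reaches (E.erase f) w y := by
  induction h with
  | refl => exact Or.inl (reaches_refl x)
  | @tail c d _ hl ih =>
    obtain ⟨g, hg, hc, hd⟩ := hl
    by_cases hgf : g = f
    · subst hgf
      exact Or.inr ⟨d, hd, reaches_refl d⟩
    · have hlink : link (E.erase f) c d := ⟨g, Finset.mem_erase.2 ⟨hgf, hg⟩, hc, hd⟩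
      rcases ih with h1 | ⟨w, hw, h2⟩
      · exact Or.inl (h1.tail hlink)
      · exact Or.inr ⟨w, hw, h2.tail hlink⟩

lemma reaches_erase (f : Finset (Fin n)) (h : reaches (E.erase f) x y) : reaches E x y :=
  reaches_mono (Finset.erase_subset _ _) h

/-! ### Components as finsets -/

noncomputable def comp (E : Finset (Finset (Fin n))) (v : Fin n) : Finset (Fin n) :=
  Set.Finite.toFinset (Set.toFinite {w | reaches E v w})

def edgesIn (E : Finset (Finset (Fin n))) (D : Finset (Fin n)) : Finset (Finset (Fin n)) :=
  E.filter (· ⊆ D)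

@[simp] lemma mem_comp : w ∈ comp E v ↔ reaches E v w := by simp [comp]

lemma mem_comp_self : v ∈ comp E v := mem_comp.2 (reaches_refl v)

lemma compSize_eq (E : Finset (Finset (Fin n))) (v : Fin n) :
    compSize E v = (comp E v).card := Set.ncard_eq_toFinset_card _ _

lemma mem_edgesIn {D g : Finset (Fin n)} : g ∈ edgesIn E D ↔ g ∈ E ∧ g ⊆ D := by
  simp [edgesIn]

lemma compEdges_eq (E : Finset (Finset (Fin n))) (v : Fin n) :
    compEdges E v = (edgesIn E (comp E v)).card := by
  have : ((E : Set (Finset (Fin n))) ∩ {e | ∀ x ∈ e, reaches E v x}) = ↑(edgesIn E (comp E v)) := by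
    ext g
    simp only [Set.mem_inter_iff, Finset.mem_coe, Set.mem_setOf_eq, mem_edgesIn]
    constructor
    · rintro ⟨h1, h2⟩; exact ⟨h1, fun x hx => mem_comp.2 (h2 x hx)⟩
    · rintro ⟨h1, h2⟩; exact ⟨h1, fun x hx => mem_comp.1 (h2 hx)⟩
  rw [compEdges, this, Set.ncard_coe_finset]

lemma comp_eq_of_reaches (h : reaches E v w) : comp E v = comp E w := by
  ext z
  simp only [mem_comp]
  exact ⟨fun h' => reaches_trans (reaches_symm h) h', fun h' => reaches_trans h h'⟩

lemma comp_disjoint (h : ¬ reaches E v w) : Disjoint (comp E v) (comp E w) := by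
  rw [Finset.disjoint_left]
  intro z hz hz'
  exact h (reaches_trans (mem_comp.1 hz) (reaches_symm (mem_comp.1 hz')))

lemma comp_eq_or_disjoint (v w : Fin n) :
    comp E v = comp E w ∨ Disjoint (comp E v) (comp E w) := by
  by_cases h : reaches E v w
  · exact Or.inl (comp_eq_of_reaches h)
  · exact Or.inr (comp_disjoint h)

lemma comp_erase_subset (f : Finset (Fin n)) (hvw : reaches E v w) :
    comp (E.erase f) w ⊆ comp E v := by
  intro z hz
  exact mem_comp.2 (reaches_trans hvw (reaches_erase f (mem_comp.1 hz)))

/-- if `x` is connected to edge `f`, then in `E.erase f` it is connected to some vertex of `f`. -/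
lemma reaches_vertex_of_erase {f : Finset (Fin n)} {a : Fin n} (ha : a ∈ f)
    (h : reaches E x a) : ∃ w ∈ f, reaches (E.erase f) w x := by
  rcases reaches_erase_decomp f (reaches_symm h) with h1 | ⟨w, hw, h2⟩
  · exact ⟨a, ha, h1⟩
  · exact ⟨w, hw, h2⟩

/-- decomposition of a component after deleting an edge inside it. -/
lemma comp_eq_biUnion_erase {f : Finset (Fin n)} (hf : f ∈ E) (hfc : f ⊆ comp E x) (hne : f.Nonempty) :
    comp E x = f.biUnion (fun w => comp (E.erase f) w) := by
  ext y
  simp only [Finset.mem_biUnion, mem_comp]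
  constructor
  · intro hy
    obtain ⟨a, ha⟩ := hne
    obtain ⟨w, hw, hwx⟩ := reaches_vertex_of_erase ha (mem_comp.1 (hfc ha))
    rcases reaches_erase_decomp f hy with h1 | ⟨w', hw', h2⟩
    · exact ⟨w, hw, reaches_trans hwx h1⟩
    · exact ⟨w', hw', h2⟩
  · rintro ⟨w, hw, hwy⟩
    exact reaches_trans (mem_comp.1 (hfc hw)) (reaches_erase f hwy)

/-- The fundamental bound: a component has at most `(b-1) * edges + 1` vertices. -/
lemma comp_card_le (hb : 1 ≤ b) :
    ∀ m (E : Finset (Finset (Fin n))), Uniform b E → ∀ x : Fin n,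
      (edgesIn E (comp E x)).card = m → (comp E x).card ≤ (b-1) * m + 1 := by
  intro m
  induction m using Nat.strong_induction_on with
  | _ m IH =>
  intro E hU x hm
  rcases Nat.eq_zero_or_pos m with rfl | hmpos
  · -- no edges in the component: component is a single vertex
    have hE0 : edgesIn E (comp E x) = ∅ := Finset.card_eq_zero.1 hm
    have : comp E x = {x} := by
      ext y
      simp only [Finset.mem_singleton, mem_comp]
      constructor
      · intro hy
        induction hy with
        | refl => rfl
        | @tail c d hc hl ih =>
          exfalso
          obtain ⟨g, hg, hcg, hdg⟩ := hl
          have hcx : reaches E x c := hc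
          have : g ∈ edgesIn E (comp E x) := by
            rw [mem_edgesIn]
            refine ⟨hg, fun z hz => mem_comp.2 ?_⟩
            exact reaches_trans hcx (reaches_of_link ⟨g, hg, hcg, hz⟩)
          simp [hE0] at this
      · rintro rfl; exact reaches_refl _
    rw [this]; simp
  · -- pick an edge f in the component
    have hne : (edgesIn E (comp E x)).Nonempty := Finset.card_pos.1 (hm ▸ hmpos)
    obtain ⟨f, hf⟩ := hne
    rw [mem_edgesIn] at hf
    obtain ⟨hfE, hfc⟩ := hf
    have hfb : f.card = b := hU f hfE
    have hfne : f.Nonempty := Finset.card_pos.1 (by omega)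
    set E' := E.erase f with hE'
    have hU' : Uniform b E' := fun e he => hU e (Finset.mem_erase.1 he).2
    set P : Finset (Finset (Fin n)) := f.image (fun w => comp E' w) with hP
    -- component is disjoint union of classes in P
    have hcomp : comp E x = P.biUnion id := by
      rw [comp_eq_biUnion_erase hfE hfc hfne]
      ext y
      simp [hP, hE']
    have hPdisj : ∀ D1 ∈ P, ∀ D2 ∈ P, D1 ≠ D2 → Disjoint D1 D2 := by
      intro D1 h1 D2 h2 hne'
      obtain ⟨w1, _, rfl⟩ := Finset.mem_image.1 h1
      obtain ⟨w2, _, rfl⟩ := Finset.mem_image.1 h2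
      rcases comp_eq_or_disjoint (E := E') w1 w2 with h | h
      · exact absurd h hne'
      · exact h
    have hcard : (comp E x).card = ∑ D ∈ P, D.card := by
      rw [hcomp]
      exact Finset.card_biUnion hPdisj
    have hsub : ∀ D ∈ P, edgesIn E' D ⊆ (edgesIn E (comp E x)).erase f := by
      intro D hD g hg
      obtain ⟨w, hwf, rfl⟩ := Finset.mem_image.1 hD
      rw [mem_edgesIn] at hg
      obtain ⟨hg1, hg2⟩ := hg
      rw [Finset.mem_erase, mem_edgesIn]
      refine ⟨(Finset.mem_erase.1 hg1).1, (Finset.mem_erase.1 hg1).2, fun z hz => ?_⟩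
      exact comp_erase_subset f (mem_comp.1 (hfc hwf)) (hg2 hz)
    -- each class satisfies the IH bound
    have hclass : ∀ D ∈ P, D.card ≤ (b-1) * (edgesIn E' D).card + 1 := by
      intro D hD
      have hDsub := hsub D hD
      obtain ⟨w, hwf, rfl⟩ := Finset.mem_image.1 hD
      have hlt : (edgesIn E' (comp E' w)).card < m := by
        calc (edgesIn E' (comp E' w)).card ≤ ((edgesIn E (comp E x)).erase f).card :=
              Finset.card_le_card hDsub
          _ = m - 1 := by rw [Finset.card_erase_of_mem (mem_edgesIn.2 ⟨hfE, hfc⟩), hm]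
          _ < m := by omega
      exact IH _ hlt E' hU' w rfl
    -- the edge sets of distinct classes are disjoint
    have hEdisj : ∀ D1 ∈ P, ∀ D2 ∈ P, D1 ≠ D2 → Disjoint (edgesIn E' D1) (edgesIn E' D2) := by
      intro D1 h1 D2 h2 hne'
      rw [Finset.disjoint_left]
      intro g hg1 hg2
      rw [mem_edgesIn] at hg1 hg2
      have hgne : g.Nonempty := Finset.card_pos.1 (by have := hU' g hg1.1; omega)
      obtain ⟨z, hz⟩ := hgne
      exact Finset.disjoint_left.1 (hPdisj D1 h1 D2 h2 hne') (hg1.2 hz) (hg2.2 hz)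
    have hEsum : ∑ D ∈ P, (edgesIn E' D).card ≤ m - 1 := by
      rw [← Finset.card_biUnion hEdisj]
      calc (P.biUnion (fun D => edgesIn E' D)).card
          ≤ ((edgesIn E (comp E x)).erase f).card := by
            apply Finset.card_le_card
            intro g hg
            obtain ⟨D, hD, hgD⟩ := Finset.mem_biUnion.1 hg
            exact hsub D hD hgD
        _ = m - 1 := by rw [Finset.card_erase_of_mem (mem_edgesIn.2 ⟨hfE, hfc⟩), hm]
    have hPcard : P.card ≤ b := le_trans Finset.card_image_le (le_of_eq hfb)
    obtain ⟨t, rfl⟩ : ∃ t, m = t + 1 := ⟨m - 1, by omega⟩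
    have key : (b-1) * (t+1) = (b-1) * t + (b-1) := by ring
    calc (comp E x).card = ∑ D ∈ P, D.card := hcard
      _ ≤ ∑ D ∈ P, ((b-1) * (edgesIn E' D).card + 1) := Finset.sum_le_sum hclass
      _ = (b-1) * (∑ D ∈ P, (edgesIn E' D).card) + P.card := by
          rw [Finset.sum_add_distrib, Finset.mul_sum, Finset.sum_const, smul_eq_mul, mul_one]
      _ ≤ (b-1) * t + b := by
          have h1 : ∑ D ∈ P, (edgesIn E' D).card ≤ t := by simpa using hEsum
          have := Nat.mul_le_mul_left (b-1) h1
          omega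
      _ ≤ (b-1) * (t+1) + 1 := by omega


/-! ### Forests -/

open Classical in
noncomputable def rootOf (E : Finset (Finset (Fin n))) (R : Finset (Fin n)) (v : Fin n) :
    Fin n :=
  if h : ∃ r, r ∈ R ∧ reaches E r v then h.choose else v

variable {R : Finset (Fin n)}

lemma rootOf_spec (hF : IsForestRHT b E R) (v : Fin n) :
    rootOf E R v ∈ R ∧ reaches E (rootOf E R v) v := by
  have h := (hF.2.1 v).exists
  rw [rootOf, dif_pos h]
  exact h.choose_spec

lemma rootOf_eq (hF : IsForestRHT b E R) {r v : Fin n} (hr : r ∈ R) (h : reaches E r v) :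
    rootOf E R v = r :=
  (hF.2.1 v).unique (rootOf_spec hF v) ⟨hr, h⟩

lemma rootOf_self (hF : IsForestRHT b E R) {r : Fin n} (hr : r ∈ R) : rootOf E R r = r :=
  rootOf_eq hF hr (reaches_refl r)

lemma root_eq_root (hF : IsForestRHT b E R) {r r' v : Fin n} (hr : r ∈ R) (hr' : r' ∈ R)
    (h : reaches E r v) (h' : reaches E r' v) : r = r' := by
  rw [← rootOf_eq hF hr h, rootOf_eq hF hr' h']

lemma comp_root_disjoint (hF : IsForestRHT b E R) {r r' : Fin n} (hr : r ∈ R) (hr' : r' ∈ R)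
    (hne : r ≠ r') : Disjoint (comp E r) (comp E r') := by
  refine comp_disjoint fun h => hne ?_
  exact root_eq_root hF hr hr' h (reaches_refl r')

lemma edge_subset_comp {g : Finset (Fin n)} {z v : Fin n} (hg : g ∈ E) (hz : z ∈ g)
    (h : reaches E v z) : g ⊆ comp E v := by
  intro x hx
  exact mem_comp.2 (reaches_trans h (reaches_of_link ⟨g, hg, hz, hx⟩))

lemma univ_eq_biUnion_comp (hF : IsForestRHT b E R) :
    (Finset.univ : Finset (Fin n)) = R.biUnion (fun r => comp E r) := by
  ext v
  simp only [Finset.mem_univ, true_iff, Finset.mem_biUnion]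
  exact ⟨rootOf E R v, (rootOf_spec hF v).1, mem_comp.2 (rootOf_spec hF v).2⟩

lemma edges_eq_biUnion (hb : 1 ≤ b) (hF : IsForestRHT b E R) :
    E = R.biUnion (fun r => edgesIn E (comp E r)) := by
  ext g
  simp only [Finset.mem_biUnion, mem_edgesIn]
  constructor
  · intro hg
    have hgne : g.Nonempty := Finset.card_pos.1 (by have := hF.1 g hg; omega)
    obtain ⟨z, hz⟩ := hgne
    exact ⟨rootOf E R z, (rootOf_spec hF z).1, hg,
      edge_subset_comp hg hz (rootOf_spec hF z).2⟩
  · rintro ⟨r, _, hg, _⟩; exact hg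

lemma card_vertices (hF : IsForestRHT b E R) : n = ∑ r ∈ R, (comp E r).card := by
  conv_lhs => rw [← Finset.card_fin n]
  rw [univ_eq_biUnion_comp hF, Finset.card_biUnion]
  intro r hr r' hr' hne
  exact comp_root_disjoint hF hr hr' hne

lemma card_edges (hb : 1 ≤ b) (hF : IsForestRHT b E R) :
    E.card = ∑ r ∈ R, (edgesIn E (comp E r)).card := by
  conv_lhs => rw [edges_eq_biUnion hb hF]
  rw [Finset.card_biUnion]
  intro r hr r' hr' hne
  simp only [Function.onFun]
  rw [Finset.disjoint_left]
  intro g hg1 hg2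
  rw [mem_edgesIn] at hg1 hg2
  have hgne : g.Nonempty := Finset.card_pos.1 (by have := hF.1 g hg1.1; omega)
  obtain ⟨z, hz⟩ := hgne
  exact Finset.disjoint_left.1 (comp_root_disjoint hF hr hr' hne) (hg1.2 hz) (hg2.2 hz)

lemma forest_count (hb : 1 ≤ b) (hF : IsForestRHT b E R) :
    n = (b - 1) * E.card + R.card := by
  have h1 := card_vertices hF
  have h2 : ∀ r ∈ R, (comp E r).card = (b-1) * (edgesIn E (comp E r)).card + 1 := by
    intro r hr
    have := hF.2.2 r hr
    rw [compEdges_eq, compSize_eq] at this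
    omega
  rw [Finset.sum_congr rfl h2, Finset.sum_add_distrib, ← Finset.mul_sum,
    Finset.sum_const, smul_eq_mul, mul_one, ← card_edges hb hF] at h1
  exact h1


/-! ### Deleting an edge from a forest -/

theorem forest_erase (hb : 2 ≤ b) (hF : IsForestRHT b E R) {e : Finset (Fin n)}
    (he : e ∈ E) :
    ∃ v, v ∈ e ∧ (rootOf E R v ∈ R) ∧ reaches (E.erase e) (rootOf E R v) v ∧
      IsForestRHT b (E.erase e) (R ∪ e.erase v) ∧
      (∀ w ∈ R, w ∈ e → w = v) ∧
      (∀ w ∈ e, ∀ ρ ∈ R, reaches (E.erase e) ρ w → w = v) := by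
  classical
  have hb1 : 1 ≤ b := by omega
  have hbe : e.card = b := hF.1 e he
  have hene : e.Nonempty := Finset.card_pos.1 (by omega)
  obtain ⟨z, hz⟩ := hene
  set r := rootOf E R z with hrdef
  have hrR : r ∈ R := (rootOf_spec hF z).1
  have hrz : reaches E r z := (rootOf_spec hF z).2
  have hec : e ⊆ comp E r := edge_subset_comp he hz hrz
  set E' := E.erase e with hE'
  have hU' : Uniform b E' := fun g hg => hF.1 g (Finset.mem_erase.1 hg).2
  set P : Finset (Finset (Fin n)) := e.image (fun w => comp E' w) with hP
  have hcompP : comp E r = P.biUnion id := by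
    rw [comp_eq_biUnion_erase he hec ⟨z, hz⟩]
    ext y
    simp [hP, hE']
  have hPdisj : ∀ D1 ∈ P, ∀ D2 ∈ P, D1 ≠ D2 → Disjoint D1 D2 := by
    intro D1 h1 D2 h2 hne'
    obtain ⟨w1, _, rfl⟩ := Finset.mem_image.1 h1
    obtain ⟨w2, _, rfl⟩ := Finset.mem_image.1 h2
    rcases comp_eq_or_disjoint (E := E') w1 w2 with h | h
    · exact absurd h hne'
    · exact h
  have hcard : (comp E r).card = ∑ D ∈ P, D.card := by
    rw [hcompP]
    exact Finset.card_biUnion hPdisj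
  set mE := (edgesIn E (comp E r)).card with hmE
  have heIn : e ∈ edgesIn E (comp E r) := mem_edgesIn.2 ⟨he, hec⟩
  have hmE1 : 1 ≤ mE := Finset.card_pos.2 ⟨e, heIn⟩
  -- edges of the component minus e distribute over the classes
  have hEdges : P.biUnion (fun D => edgesIn E' D) = (edgesIn E (comp E r)).erase e := by
    ext g
    constructor
    · intro hg
      obtain ⟨D, hD, hgD⟩ := Finset.mem_biUnion.1 hg
      obtain ⟨w, hwf, rfl⟩ := Finset.mem_image.1 hD
      rw [mem_edgesIn] at hgD
      obtain ⟨hg1, hg2⟩ := hgD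
      rw [Finset.mem_erase, mem_edgesIn]
      refine ⟨(Finset.mem_erase.1 hg1).1, (Finset.mem_erase.1 hg1).2, fun x hx => ?_⟩
      exact comp_erase_subset e (mem_comp.1 (hec hwf)) (hg2 hx)
    · intro hg
      rw [Finset.mem_erase, mem_edgesIn] at hg
      obtain ⟨hgne, hgE, hgc⟩ := hg
      have hgE' : g ∈ E' := Finset.mem_erase.2 ⟨hgne, hgE⟩
      have hgnonempty : g.Nonempty := Finset.card_pos.1 (by have := hF.1 g hgE; omega)
      obtain ⟨zg, hzg⟩ := hgnonempty
      have : zg ∈ P.biUnion id := by rw [← hcompP]; exact hgc hzg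
      obtain ⟨D, hD, hzgD⟩ := Finset.mem_biUnion.1 this
      refine Finset.mem_biUnion.2 ⟨D, hD, mem_edgesIn.2 ⟨hgE', ?_⟩⟩
      obtain ⟨w, hwf, rfl⟩ := Finset.mem_image.1 hD
      have h1 : comp E' w = comp E' zg := comp_eq_of_reaches (mem_comp.1 hzgD)
      rw [h1]
      exact edge_subset_comp hgE' hzg (reaches_refl zg)
  have hEdisj : ∀ D1 ∈ P, ∀ D2 ∈ P, D1 ≠ D2 → Disjoint (edgesIn E' D1) (edgesIn E' D2) := by
    intro D1 h1 D2 h2 hne'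
    rw [Finset.disjoint_left]
    intro g hg1 hg2
    rw [mem_edgesIn] at hg1 hg2
    have hgne : g.Nonempty := Finset.card_pos.1 (by have := hU' g hg1.1; omega)
    obtain ⟨zg, hzg⟩ := hgne
    exact Finset.disjoint_left.1 (hPdisj D1 h1 D2 h2 hne') (hg1.2 hzg) (hg2.2 hzg)
  have hMsum : ∑ D ∈ P, (edgesIn E' D).card = mE - 1 := by
    rw [← Finset.card_biUnion hEdisj]
    have : (P.biUnion fun D => edgesIn E' D).card = ((edgesIn E (comp E r)).erase e).card := by
      rw [hEdges]
    rw [this, Finset.card_erase_of_mem heIn]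
  have hexc : (b-1) * mE + 1 = (comp E r).card := by
    have := hF.2.2 r hrR
    rwa [compEdges_eq, compSize_eq] at this
  have hbound : ∀ D ∈ P, D.card ≤ (b-1) * (edgesIn E' D).card + 1 := by
    intro D hD
    obtain ⟨w, hwf, rfl⟩ := Finset.mem_image.1 hD
    exact comp_card_le hb1 _ E' hU' w rfl
  have hPb : P.card ≤ b := le_trans Finset.card_image_le (le_of_eq hbe)
  have hRHS : ∑ D ∈ P, ((b-1) * (edgesIn E' D).card + 1) = (b-1) * (mE - 1) + P.card := by
    rw [Finset.sum_add_distrib, ← Finset.mul_sum, hMsum, Finset.sum_const, smul_eq_mul, mul_one]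
  obtain ⟨t, ht⟩ : ∃ t, mE = t + 1 := ⟨mE - 1, by omega⟩
  have hkey : (b-1) * mE = (b-1) * (mE - 1) + (b-1) := by
    rw [ht]; simp; ring
  have hPcard : P.card = b := by
    have h1 : (b-1) * mE + 1 ≤ (b-1) * (mE - 1) + P.card := by
      calc (b-1) * mE + 1 = (comp E r).card := hexc
        _ = ∑ D ∈ P, D.card := hcard
        _ ≤ ∑ D ∈ P, ((b-1) * (edgesIn E' D).card + 1) := Finset.sum_le_sum hbound
        _ = (b-1) * (mE - 1) + P.card := hRHS
    omega
  have hsum_eq : ∑ D ∈ P, D.card = ∑ D ∈ P, ((b-1) * (edgesIn E' D).card + 1) := by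
    rw [hRHS, ← hcard, ← hexc]
    omega
  have hterm : ∀ D ∈ P, D.card = (b-1) * (edgesIn E' D).card + 1 :=
    (Finset.sum_eq_sum_iff_of_le hbound).1 hsum_eq
  -- the class map is injective on e
  have hinjOn : Set.InjOn (fun w => comp E' w) e := by
    apply Finset.card_image_iff.1
    rw [← hP, hPcard, hbe]
  have hinj : ∀ w1 ∈ e, ∀ w2 ∈ e, comp E' w1 = comp E' w2 → w1 = w2 := by
    intro w1 h1 w2 h2 h
    exact hinjOn h1 h2 h
  have hdisj : ∀ w1 ∈ e, ∀ w2 ∈ e, w1 ≠ w2 → Disjoint (comp E' w1) (comp E' w2) := by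
    intro w1 h1 w2 h2 hne'
    rcases comp_eq_or_disjoint (E := E') w1 w2 with h | h
    · exact absurd (hinj w1 h1 w2 h2 h) hne'
    · exact h
  -- the apex
  obtain ⟨v, hv, hvr⟩ : ∃ w ∈ e, reaches E' w r := reaches_vertex_of_erase hz hrz
  have hrv : reaches E' r v := reaches_symm hvr
  -- apex uniqueness
  have K7 : ∀ w ∈ e, ∀ ρ ∈ R, reaches E' ρ w → w = v := by
    intro w hw ρ hρ hreach
    have h1 : reaches E ρ w := reaches_erase e hreach
    have h2 : reaches E r w := reaches_trans hrz (reaches_of_link ⟨e, he, hz, hw⟩)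
    have hρr : ρ = r := root_eq_root hF hρ hrR h1 h2
    subst hρr
    -- now reaches E' ρ w and reaches E' ρ v : same class
    have : comp E' w = comp E' v := by
      rw [← comp_eq_of_reaches hreach, comp_eq_of_reaches hrv]
    exact hinj w hw v hv this
  have K8 : ∀ w ∈ R, w ∈ e → w = v := by
    intro w hwR hwe
    exact K7 w hwe w hwR (reaches_refl w)
  -- components of non-r roots are unchanged
  have K4 : ∀ ρ ∈ R, ρ ≠ r → comp E' ρ = comp E ρ := by
    intro ρ hρ hne'
    apply Finset.Subset.antisymm
    · intro y hy
      exact mem_comp.2 (reaches_erase e (mem_comp.1 hy))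
    · intro y hy
      rcases reaches_erase_decomp e (mem_comp.1 hy) with h1 | ⟨w, hw, h2⟩
      · exact mem_comp.2 h1
      · exfalso
        have h3 : reaches E r y :=
          reaches_trans (mem_comp.1 (hec hw)) (reaches_erase e h2)
        exact hne' (root_eq_root hF hρ hrR (mem_comp.1 hy) h3)
  have K5 : ∀ ρ ∈ R, ρ ≠ r → edgesIn E' (comp E ρ) = edgesIn E (comp E ρ) := by
    intro ρ hρ hne'
    ext g
    simp only [mem_edgesIn]
    constructor
    · rintro ⟨h1, h2⟩
      exact ⟨(Finset.mem_erase.1 h1).2, h2⟩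
    · rintro ⟨h1, h2⟩
      refine ⟨Finset.mem_erase.2 ⟨?_, h1⟩, h2⟩
      rintro rfl
      have : z ∈ comp E ρ := h2 hz
      exact Finset.disjoint_left.1 (comp_root_disjoint hF hrR hρ (Ne.symm hne'))
        (hec hz) this
  have K3 : ∀ w ∈ e, (comp E' w).card = (b-1) * (edgesIn E' (comp E' w)).card + 1 := by
    intro w hw
    exact hterm _ (Finset.mem_image_of_mem _ hw)
  -- membership in e's component splits over the classes
  have hsplit : ∀ x : Fin n, reaches E r x → ∃ w ∈ e, reaches E' w x := by
    intro x hx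
    have : x ∈ P.biUnion id := by rw [← hcompP]; exact mem_comp.2 hx
    obtain ⟨D, hD, hxD⟩ := Finset.mem_biUnion.1 this
    obtain ⟨w, hwf, rfl⟩ := Finset.mem_image.1 hD
    exact ⟨w, hwf, mem_comp.1 hxD⟩
  -- the new forest
  have hFnew : IsForestRHT b E' (R ∪ e.erase v) := by
    refine ⟨hU', ?_, ?_⟩
    · -- unique roots
      intro x
      set ρ0 := rootOf E R x with hρ0
      have hρ0R : ρ0 ∈ R := (rootOf_spec hF x).1
      have hρ0x : reaches E ρ0 x := (rootOf_spec hF x).2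
      by_cases hcase : ρ0 = r
      · -- x is in the component of e
        obtain ⟨w, hw, hwx⟩ := hsplit x (hcase ▸ hρ0x)
        have huniq : ∀ ρ', (ρ' ∈ R ∪ e.erase v ∧ reaches E' ρ' x) →
            ρ' = (if w = v then r else w) := by
          rintro ρ' ⟨hρ', hρ'x⟩
          rcases Finset.mem_union.1 hρ' with hρ'R | hρ'e
          · have h1 : reaches E ρ' x := reaches_erase e hρ'x
            have h2 : ρ' = ρ0 := root_eq_root hF hρ'R hρ0R h1 hρ0x
            rw [h2, hcase]
            -- now r reaches x in E', and w reaches x in E' : so reaches E' r w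
            have hρ'x' : reaches E' r x := by rwa [h2, hcase] at hρ'x
            have h3 : reaches E' r w := reaches_trans hρ'x' (reaches_symm hwx)
            have h4 : w = v := K7 w hw r hrR h3
            rw [if_pos h4]
          · have hρ'in : ρ' ∈ e := (Finset.mem_erase.1 hρ'e).2
            have hρ'nv : ρ' ≠ v := (Finset.mem_erase.1 hρ'e).1
            have h1 : reaches E' ρ' w := reaches_trans hρ'x (reaches_symm hwx)
            have h2 : comp E' ρ' = comp E' w := comp_eq_of_reaches h1
            have h3 : ρ' = w := hinj ρ' hρ'in w hw h2
            rw [h3]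
            rw [if_neg (h3 ▸ hρ'nv)]
        by_cases hwv : w = v
        · refine ⟨r, ⟨Finset.mem_union_left _ hrR, ?_⟩, fun ρ' h' => by
            rw [huniq ρ' h', if_pos hwv]⟩
          exact reaches_trans hrv (hwv ▸ hwx)
        · refine ⟨w, ⟨Finset.mem_union_right _ (Finset.mem_erase.2 ⟨hwv, hw⟩), hwx⟩,
            fun ρ' h' => by rw [huniq ρ' h', if_neg hwv]⟩
      · -- x is in an untouched component
        refine ⟨ρ0, ⟨Finset.mem_union_left _ hρ0R, ?_⟩, ?_⟩
        · have : x ∈ comp E' ρ0 := by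
            rw [K4 ρ0 hρ0R hcase]
            exact mem_comp.2 hρ0x
          exact mem_comp.1 this
        · rintro ρ' ⟨hρ', hρ'x⟩
          rcases Finset.mem_union.1 hρ' with hρ'R | hρ'e
          · exact root_eq_root hF hρ'R hρ0R (reaches_erase e hρ'x) hρ0x
          · exfalso
            have hρ'in : ρ' ∈ e := (Finset.mem_erase.1 hρ'e).2
            have h1 : reaches E r x :=
              reaches_trans (mem_comp.1 (hec hρ'in)) (reaches_erase e hρ'x)
            exact hcase (root_eq_root hF hρ0R hrR hρ0x h1)
    · -- excess condition
      intro ρ hρ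
      rcases Finset.mem_union.1 hρ with hρR | hρe
      · by_cases hcase : ρ = r
        · have h1 : comp E' ρ = comp E' v := by
            rw [hcase]; exact comp_eq_of_reaches hrv
          rw [compEdges_eq, compSize_eq, h1, K3 v hv]
        · rw [compEdges_eq, compSize_eq, K4 ρ hρR hcase, K5 ρ hρR hcase,
            ← compEdges_eq, ← compSize_eq]
          exact hF.2.2 ρ hρR
      · have hin : ρ ∈ e := (Finset.mem_erase.1 hρe).2
        rw [compEdges_eq, compSize_eq, K3 ρ hin]
  have hrootv : rootOf E R v = r := by
    apply rootOf_eq hF hrR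
    exact reaches_erase e hrv
  exact ⟨v, hv, by rw [hrootv]; exact hrR, by rw [hrootv]; exact hrv,
    hFnew, K8, K7⟩


lemma excess_card (hF : IsForestRHT b E R) {r : Fin n} (hr : r ∈ R) :
    (comp E r).card = (b-1) * (edgesIn E (comp E r)).card + 1 := by
  have := hF.2.2 r hr
  rw [compEdges_eq, compSize_eq] at this
  omega

/-! ### Inserting an edge into a forest -/

theorem forest_insert (hb : 2 ≤ b) (hF : IsForestRHT b E R) {v : Fin n} {S : Finset (Fin n)}
    (hS : S ⊆ R) (hScard : S.card = b - 1) (hroot : rootOf E R v ∉ S) :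
    insert v S ∉ E ∧ (insert v S).card = b ∧ v ∉ S ∧
      IsForestRHT b (insert (insert v S) E) (R \ S) := by
  classical
  have hb1 : 1 ≤ b := by omega
  set rt := rootOf E R v with hrt
  have hrtR : rt ∈ R := (rootOf_spec hF v).1
  have hrtv : reaches E rt v := (rootOf_spec hF v).2
  have hself : ∀ w ∈ R, rootOf E R w = w := fun w hw => rootOf_self hF hw
  have hvS : v ∉ S := by
    intro hv
    have : rt = v := by rw [hrt, hself v (hS hv)]
    exact hroot (this ▸ hv)
  set e := insert v S with hedef
  have hecard : e.card = b := by
    rw [hedef, Finset.card_insert_of_notMem hvS, hScard]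
    omega
  have hSne : S.Nonempty := Finset.card_pos.1 (by omega)
  have hsep : ∀ w ∈ S, ¬ reaches E v w := by
    intro w hw hreach
    exact hroot (by rw [hrt, rootOf_eq hF (hS hw) (reaches_symm hreach)]; exact hw)
  have hsepS : ∀ w1 ∈ S, ∀ w2 ∈ S, w1 ≠ w2 → ¬ reaches E w1 w2 := by
    intro w1 h1 w2 h2 hne hreach
    exact hne (root_eq_root hF (hS h1) (hS h2) hreach (reaches_refl w2))
  have heE : e ∉ E := by
    intro heE
    obtain ⟨w, hw⟩ := hSne
    exact hsep w hw (reaches_of_link ⟨e, heE, Finset.mem_insert_self v S, Finset.mem_insert_of_mem hw⟩)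
  set Ep := insert e E with hEp
  have herase : Ep.erase e = E := Finset.erase_insert heE
  have hmono : ∀ {x y : Fin n}, reaches E x y → reaches Ep x y :=
    fun h => reaches_mono (Finset.subset_insert _ _) h
  have hchar : ∀ x y : Fin n, reaches Ep x y ↔
      (reaches E x y ∨ ∃ a ∈ e, ∃ c ∈ e, reaches E x a ∧ reaches E c y) := by
    intro x y
    constructor
    · intro h
      rcases reaches_erase_decomp e h with h1 | ⟨c, hc, h2⟩
      · rw [herase] at h1; exact Or.inl h1
      · rw [herase] at h2
        rcases reaches_erase_decomp e (reaches_symm h) with h3 | ⟨a, ha, h4⟩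
        · rw [herase] at h3; exact Or.inl (reaches_symm h3)
        · rw [herase] at h4
          exact Or.inr ⟨a, ha, c, hc, reaches_symm h4, h2⟩
    · rintro (h | ⟨a, ha, c, hc, h1, h2⟩)
      · exact hmono h
      · exact reaches_trans (hmono h1)
          (reaches_trans (reaches_of_link ⟨e, Finset.mem_insert_self e E, ha, hc⟩) (hmono h2))
  have hUp : Uniform b Ep := by
    intro g hg
    rcases Finset.mem_insert.1 hg with rfl | hg'
    · exact hecard
    · exact hF.1 g hg'
  have hrtS : rt ∉ S := hroot
  -- classification of roots reaching a vertex of e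
  have hclassify : ∀ a ∈ e, ∀ ρ ∈ R, reaches E ρ a → (a = v ∧ ρ = rt) ∨ (a ∈ S ∧ ρ = a) := by
    intro a ha ρ hρ hreach
    rcases Finset.mem_insert.1 ha with rfl | haS
    · exact Or.inl ⟨rfl, by rw [← rootOf_eq hF hρ hreach, hrt]⟩
    · exact Or.inr ⟨haS, root_eq_root hF hρ (hS haS) hreach (reaches_refl a)⟩
  -- new forest
  refine ⟨heE, hecard, hvS, hUp, ?_, ?_⟩
  · -- unique roots
    intro x
    set ρ0 := rootOf E R x with hρ0
    have hρ0R : ρ0 ∈ R := (rootOf_spec hF x).1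
    have hρ0x : reaches E ρ0 x := (rootOf_spec hF x).2
    have hveq : v ∈ e := Finset.mem_insert_self v S
    by_cases hx : ρ0 ∈ S
    · refine ⟨rt, ⟨Finset.mem_sdiff.2 ⟨hrtR, hrtS⟩, ?_⟩, ?_⟩
      · exact (hchar rt x).2 (Or.inr ⟨v, hveq, ρ0, Finset.mem_insert_of_mem hx, hrtv, hρ0x⟩)
      · rintro ρ'' ⟨hρ'', hreach''⟩
        have hρ''R : ρ'' ∈ R := (Finset.mem_sdiff.1 hρ'').1
        have hρ''S : ρ'' ∉ S := (Finset.mem_sdiff.1 hρ'').2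
        rcases (hchar ρ'' x).1 hreach'' with h | ⟨a, ha, c, hc, h1, h2⟩
        · exact absurd (root_eq_root hF hρ''R hρ0R h hρ0x ▸ hx) hρ''S
        · rcases hclassify a ha ρ'' hρ''R h1 with ⟨_, h3⟩ | ⟨h3, h4⟩
          · exact h3
          · exact absurd (h4 ▸ h3) hρ''S
    · by_cases hxrt : ρ0 = rt
      · refine ⟨rt, ⟨Finset.mem_sdiff.2 ⟨hrtR, hrtS⟩, hmono (hxrt ▸ hρ0x)⟩, ?_⟩
        rintro ρ'' ⟨hρ'', hreach''⟩
        have hρ''R : ρ'' ∈ R := (Finset.mem_sdiff.1 hρ'').1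
        have hρ''S : ρ'' ∉ S := (Finset.mem_sdiff.1 hρ'').2
        rcases (hchar ρ'' x).1 hreach'' with h | ⟨a, ha, c, hc, h1, h2⟩
        · rw [root_eq_root hF hρ''R hρ0R h hρ0x, hxrt]
        · rcases hclassify a ha ρ'' hρ''R h1 with ⟨_, h3⟩ | ⟨h3, h4⟩
          · exact h3
          · exact absurd (h4 ▸ h3) hρ''S
      · refine ⟨ρ0, ⟨Finset.mem_sdiff.2 ⟨hρ0R, hx⟩, hmono hρ0x⟩, ?_⟩
        rintro ρ'' ⟨hρ'', hreach''⟩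
        have hρ''R : ρ'' ∈ R := (Finset.mem_sdiff.1 hρ'').1
        have hρ''S : ρ'' ∉ S := (Finset.mem_sdiff.1 hρ'').2
        rcases (hchar ρ'' x).1 hreach'' with h | ⟨a, ha, c, hc, h1, h2⟩
        · exact root_eq_root hF hρ''R hρ0R h hρ0x
        · exfalso
          rcases Finset.mem_insert.1 hc with rfl | hcS
          · have : reaches E rt x := reaches_trans hrtv h2
            exact hxrt (root_eq_root hF hρ0R hrtR hρ0x this)
          · exact hx (root_eq_root hF hρ0R (hS hcS) hρ0x h2 ▸ hcS)
  · -- excess condition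
    intro ρ hρ
    have hρR : ρ ∈ R := (Finset.mem_sdiff.1 hρ).1
    have hρS : ρ ∉ S := (Finset.mem_sdiff.1 hρ).2
    have hveq : v ∈ e := Finset.mem_insert_self v S
    by_cases hcase : ρ = rt
    · -- the merged component
      rw [hcase]
      have hcompv : comp E rt = comp E v := comp_eq_of_reaches hrtv
      have hcomp_merged : comp Ep rt = comp E v ∪ S.biUnion (fun w => comp E w) := by
        ext y
        simp only [Finset.mem_union, Finset.mem_biUnion, mem_comp]
        constructor
        · intro h
          rcases (hchar rt y).1 h with h1 | ⟨a, ha, c, hc, h1, h2⟩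
          · exact Or.inl (reaches_trans (reaches_symm hrtv) h1)
          · rcases Finset.mem_insert.1 hc with rfl | hcS
            · exact Or.inl h2
            · exact Or.inr ⟨c, hcS, h2⟩
        · rintro (h | ⟨w, hw, h⟩)
          · exact (hchar rt y).2 (Or.inr ⟨v, hveq, v, hveq, hrtv, h⟩)
          · exact (hchar rt y).2 (Or.inr ⟨v, hveq, w, Finset.mem_insert_of_mem hw, hrtv, h⟩)
      have hdisjvS : ∀ w ∈ S, Disjoint (comp E v) (comp E w) :=
        fun w hw => comp_disjoint (hsep w hw)
      have hdisjSS : ∀ w1 ∈ S, ∀ w2 ∈ S, w1 ≠ w2 → Disjoint (comp E w1) (comp E w2) :=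
        fun w1 h1 w2 h2 hne => comp_disjoint (hsepS w1 h1 w2 h2 hne)
      have hdisjU : Disjoint (comp E v) (S.biUnion (fun w => comp E w)) := by
        rw [Finset.disjoint_biUnion_right]
        exact hdisjvS
      have hsize : (comp Ep rt).card =
          (comp E v).card + ∑ w ∈ S, (comp E w).card := by
        rw [hcomp_merged, Finset.card_union_of_disjoint hdisjU, Finset.card_biUnion hdisjSS]
      -- edges in the merged component
      have hedges_merged : edgesIn Ep (comp Ep rt) =
          insert e (edgesIn E (comp E v) ∪ S.biUnion (fun w => edgesIn E (comp E w))) := by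
        ext g
        simp only [mem_edgesIn, Finset.mem_insert, Finset.mem_union, Finset.mem_biUnion]
        constructor
        · rintro ⟨hg, hgsub⟩
          rcases Finset.mem_insert.1 hg with rfl | hgE
          · exact Or.inl rfl
          · right
            have hgne : g.Nonempty := Finset.card_pos.1 (by have := hF.1 g hgE; omega)
            obtain ⟨zg, hzg⟩ := hgne
            have hzC : zg ∈ comp E v ∪ S.biUnion (fun w => comp E w) := by
              rw [← hcomp_merged]; exact hgsub hzg
            rcases Finset.mem_union.1 hzC with h1 | h1
            · left
              refine ⟨hgE, ?_⟩
              have : comp E zg = comp E v := (comp_eq_of_reaches (mem_comp.1 h1)).symm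
              rw [← this]
              exact edge_subset_comp hgE hzg (reaches_refl zg)
            · obtain ⟨w, hw, hzw⟩ := Finset.mem_biUnion.1 h1
              right
              refine ⟨w, hw, hgE, ?_⟩
              have : comp E zg = comp E w := (comp_eq_of_reaches (mem_comp.1 hzw)).symm
              rw [← this]
              exact edge_subset_comp hgE hzg (reaches_refl zg)
        · intro h
          have hCsub : comp E v ∪ S.biUnion (fun w => comp E w) = comp Ep rt :=
            hcomp_merged.symm
          rcases h with rfl | ⟨hgE, hgsub⟩ | ⟨w, hw, hgE, hgsub⟩
          · refine ⟨Finset.mem_insert_self _ _, ?_⟩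
            rw [hcomp_merged]
            intro a ha
            rcases Finset.mem_insert.1 ha with rfl | haS
            · exact Finset.mem_union_left _ mem_comp_self
            · exact Finset.mem_union_right _ (Finset.mem_biUnion.2 ⟨a, haS, mem_comp_self⟩)
          · refine ⟨Finset.mem_insert_of_mem hgE, ?_⟩
            rw [hcomp_merged]
            exact fun a ha => Finset.mem_union_left _ (hgsub ha)
          · refine ⟨Finset.mem_insert_of_mem hgE, ?_⟩
            rw [hcomp_merged]
            exact fun a ha => Finset.mem_union_right _ (Finset.mem_biUnion.2 ⟨w, hw, hgsub ha⟩)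
      have hedisjvS : ∀ w ∈ S, Disjoint (edgesIn E (comp E v)) (edgesIn E (comp E w)) := by
        intro w hw
        rw [Finset.disjoint_left]
        intro g hg1 hg2
        rw [mem_edgesIn] at hg1 hg2
        have hgne : g.Nonempty := Finset.card_pos.1 (by have := hF.1 g hg1.1; omega)
        obtain ⟨zg, hzg⟩ := hgne
        exact Finset.disjoint_left.1 (hdisjvS w hw) (hg1.2 hzg) (hg2.2 hzg)
      have hedisjSS : ∀ w1 ∈ S, ∀ w2 ∈ S, w1 ≠ w2 →
          Disjoint (edgesIn E (comp E w1)) (edgesIn E (comp E w2)) := by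
        intro w1 h1 w2 h2 hne
        rw [Finset.disjoint_left]
        intro g hg1 hg2
        rw [mem_edgesIn] at hg1 hg2
        have hgne : g.Nonempty := Finset.card_pos.1 (by have := hF.1 g hg1.1; omega)
        obtain ⟨zg, hzg⟩ := hgne
        exact Finset.disjoint_left.1 (hdisjSS w1 h1 w2 h2 hne) (hg1.2 hzg) (hg2.2 hzg)
      have heNotIn : e ∉ edgesIn E (comp E v) ∪ S.biUnion (fun w => edgesIn E (comp E w)) := by
        intro h
        rcases Finset.mem_union.1 h with h1 | h1
        · exact heE (mem_edgesIn.1 h1).1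
        · obtain ⟨w, hw, h2⟩ := Finset.mem_biUnion.1 h1
          exact heE (mem_edgesIn.1 h2).1
      have hedgecard : (edgesIn Ep (comp Ep rt)).card =
          1 + ((edgesIn E (comp E v)).card + ∑ w ∈ S, (edgesIn E (comp E w)).card) := by
        rw [hedges_merged, Finset.card_insert_of_notMem heNotIn,
          Finset.card_union_of_disjoint (by
            rw [Finset.disjoint_biUnion_right]; exact hedisjvS),
          Finset.card_biUnion hedisjSS]
        omega
      -- now compute
      rw [compEdges_eq, compSize_eq, hedgecard, hsize]
      have hv_exc : (comp E v).card = (b-1) * (edgesIn E (comp E v)).card + 1 := by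
        have := excess_card hF hrtR
        rwa [hcompv] at this
      have hw_exc : ∀ w ∈ S, (comp E w).card = (b-1) * (edgesIn E (comp E w)).card + 1 :=
        fun w hw => excess_card hF (hS hw)
      rw [Finset.sum_congr rfl hw_exc, hv_exc, Finset.sum_add_distrib, ← Finset.mul_sum,
        Finset.sum_const, smul_eq_mul, mul_one, hScard]
      ring
    · -- untouched component
      have hcompeq : comp Ep ρ = comp E ρ := by
        apply Finset.Subset.antisymm
        · intro y hy
          rcases (hchar ρ y).1 (mem_comp.1 hy) with h1 | ⟨a, ha, c, hc, h1, h2⟩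
          · exact mem_comp.2 h1
          · exfalso
            rcases hclassify a ha ρ hρR h1 with ⟨_, h3⟩ | ⟨h3, h4⟩
            · exact hcase h3
            · exact hρS (h4 ▸ h3)
        · exact fun y hy => mem_comp.2 (hmono (mem_comp.1 hy))
      have hedgeeq : edgesIn Ep (comp E ρ) = edgesIn E (comp E ρ) := by
        ext g
        simp only [mem_edgesIn]
        constructor
        · rintro ⟨hg, hgsub⟩
          rcases Finset.mem_insert.1 hg with rfl | hgE
          · exfalso
            have : v ∈ comp E ρ := hgsub (Finset.mem_insert_self v S)
            have h1 : reaches E ρ v := mem_comp.1 this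
            exact hcase (by rw [← rootOf_eq hF hρR h1, hrt])
          · exact ⟨hgE, hgsub⟩
        · rintro ⟨hg, hgsub⟩
          exact ⟨Finset.mem_insert_of_mem hg, hgsub⟩
      rw [compEdges_eq, compSize_eq, hcompeq, hedgeeq, ← compEdges_eq, ← compSize_eq]
      exact hF.2.2 ρ hρR


/-! ### Counting -/

lemma forest_erase_choose_eq (hb : 2 ≤ b) (hF : IsForestRHT b E R) {e : Finset (Fin n)}
    (he : e ∈ E) {v ρ : Fin n} (hv : v ∈ e) (hρ : ρ ∈ R)
    (hreach : reaches (E.erase e) ρ v) :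
    (forest_erase hb hF he).choose = v :=
  ((forest_erase hb hF he).choose_spec.2.2.2.2.2 v hv ρ hρ hreach).symm

noncomputable def FF (b n s : ℕ) : Finset (Finset (Finset (Fin n)) × Finset (Fin n)) :=
  Set.Finite.toFinset (Set.toFinite {p : Finset (Finset (Fin n)) × Finset (Fin n) |
    IsForestRHT b p.1 p.2 ∧ p.1.card = s})

lemma mem_FF {s : ℕ} {p : Finset (Finset (Fin n)) × Finset (Fin n)} :
    p ∈ FF b n s ↔ IsForestRHT b p.1 p.2 ∧ p.1.card = s := by
  simp [FF]

noncomputable def extF (b : ℕ) (p : Finset (Finset (Fin n)) × Finset (Fin n)) :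
    Finset (Σ _ : Fin n, Finset (Fin n)) :=
  Finset.univ.sigma (fun v => (p.2.erase (rootOf p.1 p.2 v)).powersetCard (b-1))

lemma mem_extF {p : Finset (Finset (Fin n)) × Finset (Fin n)}
    {q : Σ _ : Fin n, Finset (Fin n)} :
    q ∈ extF b p ↔ q.2 ⊆ p.2.erase (rootOf p.1 p.2 q.1) ∧ q.2.card = b - 1 := by
  obtain ⟨v, S⟩ := q
  simp [extF, Finset.mem_sigma, Finset.mem_powersetCard]

theorem rec_card (hb : 2 ≤ b) (n s : ℕ) :
    ((FF b n (s+1)).sigma (fun p => p.1)).card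
      = ((FF b n s).sigma (fun p => extF b p)).card := by
  refine Finset.card_bij'
    (fun a ha =>
      ⟨(a.1.1.erase a.2,
        a.1.2 ∪ a.2.erase (forest_erase hb (mem_FF.1 (Finset.mem_sigma.1 ha).1).1
          (Finset.mem_sigma.1 ha).2).choose),
       ⟨(forest_erase hb (mem_FF.1 (Finset.mem_sigma.1 ha).1).1
          (Finset.mem_sigma.1 ha).2).choose,
        a.2.erase (forest_erase hb (mem_FF.1 (Finset.mem_sigma.1 ha).1).1
          (Finset.mem_sigma.1 ha).2).choose⟩⟩)
    (fun a _ => ⟨(insert (insert a.2.1 a.2.2) a.1.1, a.1.2 \ a.2.2), insert a.2.1 a.2.2⟩)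
    ?_ ?_ ?_ ?_
  · -- forward lands in target
    intro a ha
    have hF := (mem_FF.1 (Finset.mem_sigma.1 ha).1).1
    have hcard := (mem_FF.1 (Finset.mem_sigma.1 ha).1).2
    have he := (Finset.mem_sigma.1 ha).2
    obtain ⟨hv, hrtR, hvr, hFn, hRe, huniq⟩ :=
      (forest_erase hb (mem_FF.1 (Finset.mem_sigma.1 ha).1).1
        (Finset.mem_sigma.1 ha).2).choose_spec
    set v := (forest_erase hb (mem_FF.1 (Finset.mem_sigma.1 ha).1).1
        (Finset.mem_sigma.1 ha).2).choose with hvdef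
    rw [Finset.mem_sigma]
    constructor
    · exact mem_FF.2 ⟨hFn, by rw [Finset.card_erase_of_mem he]; omega⟩
    · rw [mem_extF]
      have hroot' : rootOf (a.1.1.erase a.2) (a.1.2 ∪ a.2.erase v) v = rootOf a.1.1 a.1.2 v :=
        rootOf_eq hFn (Finset.mem_union_left _ hrtR) hvr
      constructor
      · intro w hw
        rw [Finset.mem_erase]
        refine ⟨?_, Finset.mem_union_right _ hw⟩
        rw [hroot']
        intro hweq
        have hwR : w ∈ a.1.2 := hweq ▸ hrtR
        have := hRe w hwR (Finset.mem_erase.1 hw).2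
        exact (Finset.mem_erase.1 hw).1 this
      · rw [Finset.card_erase_of_mem hv, hF.1 a.2 he]
  · -- backward lands in source
    intro a ha
    have hF := (mem_FF.1 (Finset.mem_sigma.1 ha).1).1
    have hcard := (mem_FF.1 (Finset.mem_sigma.1 ha).1).2
    have hext := mem_extF.1 (Finset.mem_sigma.1 ha).2
    have hS : a.2.2 ⊆ a.1.2 := hext.1.trans (Finset.erase_subset _ _)
    have hroot : rootOf a.1.1 a.1.2 a.2.1 ∉ a.2.2 :=
      fun h => (Finset.mem_erase.1 (hext.1 h)).1 rfl
    obtain ⟨heE, hecard, hvS, hFp⟩ := forest_insert hb hF hS hext.2 hroot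
    rw [Finset.mem_sigma]
    exact ⟨mem_FF.2 ⟨hFp, by rw [Finset.card_insert_of_notMem heE]; omega⟩,
      Finset.mem_insert_self _ _⟩
  · -- left inverse
    intro a ha
    dsimp only
    have hF := (mem_FF.1 (Finset.mem_sigma.1 ha).1).1
    have he := (Finset.mem_sigma.1 ha).2
    obtain ⟨hv, hrtR, hvr, hFn, hRe, huniq⟩ :=
      (forest_erase hb (mem_FF.1 (Finset.mem_sigma.1 ha).1).1
        (Finset.mem_sigma.1 ha).2).choose_spec
    set v := (forest_erase hb (mem_FF.1 (Finset.mem_sigma.1 ha).1).1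
        (Finset.mem_sigma.1 ha).2).choose with hvdef
    have h1 : insert v (a.2.erase v) = a.2 := Finset.insert_erase hv
    have h3 : (a.1.2 ∪ a.2.erase v) \ (a.2.erase v) = a.1.2 := by
      ext w
      simp only [Finset.mem_sdiff, Finset.mem_union]
      constructor
      · rintro ⟨h | h, h'⟩
        · exact h
        · exact absurd h h'
      · intro hw
        refine ⟨Or.inl hw, fun hcon => ?_⟩
        have := hRe w hw (Finset.mem_erase.1 hcon).2
        exact (Finset.mem_erase.1 hcon).1 this
    rw [h1, Finset.insert_erase he, h3]
  · -- right inverse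
    intro a ha
    dsimp only
    have hF := (mem_FF.1 (Finset.mem_sigma.1 ha).1).1
    have hext := mem_extF.1 (Finset.mem_sigma.1 ha).2
    have hS : a.2.2 ⊆ a.1.2 := hext.1.trans (Finset.erase_subset _ _)
    have hroot : rootOf a.1.1 a.1.2 a.2.1 ∉ a.2.2 :=
      fun h => (Finset.mem_erase.1 (hext.1 h)).1 rfl
    obtain ⟨heE, hecard, hvS, hFp⟩ := forest_insert hb hF hS hext.2 hroot
    have herase : (insert (insert a.2.1 a.2.2) a.1.1).erase (insert a.2.1 a.2.2) = a.1.1 :=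
      Finset.erase_insert heE
    have hreach : reaches ((insert (insert a.2.1 a.2.2) a.1.1).erase (insert a.2.1 a.2.2))
        (rootOf a.1.1 a.1.2 a.2.1) a.2.1 := by
      rw [herase]
      exact (rootOf_spec hF a.2.1).2
    have hrtmem : rootOf a.1.1 a.1.2 a.2.1 ∈ a.1.2 \ a.2.2 :=
      Finset.mem_sdiff.2 ⟨(rootOf_spec hF a.2.1).1, hroot⟩
    rw [forest_erase_choose_eq hb hFp (Finset.mem_insert_self _ _)
      (Finset.mem_insert_self _ _) hrtmem hreach]
    rw [herase, Finset.erase_insert hvS, Finset.sdiff_union_of_subset hS]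

theorem recurrence (hb : 2 ≤ b) (n s : ℕ) :
    (s+1) * (FF b n (s+1)).card
      = (FF b n s).card * (n * Nat.choose (n - (b-1)*s - 1) (b-1)) := by
  have h1 : ((FF b n (s+1)).sigma (fun p => p.1)).card = (s+1) * (FF b n (s+1)).card := by
    rw [Finset.card_sigma]
    rw [Finset.sum_congr rfl (fun p hp => (mem_FF.1 hp).2)]
    rw [Finset.sum_const, smul_eq_mul, mul_comm]
  have h2 : ((FF b n s).sigma (fun p => extF b p)).card
      = (FF b n s).card * (n * Nat.choose (n - (b-1)*s - 1) (b-1)) := by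
    rw [Finset.card_sigma]
    rw [Finset.sum_congr rfl (fun p hp => ?_), Finset.sum_const, smul_eq_mul]
    have hF := (mem_FF.1 hp).1
    have hcard := (mem_FF.1 hp).2
    have hcount : n = (b-1) * s + p.2.card := by
      have h := forest_count (show 1 ≤ b by omega) hF
      rw [hcard] at h
      exact h
    have hRcard : p.2.card - 1 = n - (b-1)*s - 1 := by omega
    rw [extF, Finset.card_sigma]
    rw [Finset.sum_congr rfl (fun v _ => ?_), Finset.sum_const, smul_eq_mul,
      Finset.card_univ, Fintype.card_fin]
    rw [Finset.card_powersetCard, Finset.card_erase_of_mem (rootOf_spec hF v).1, hRcard]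
  calc (s+1) * (FF b n (s+1)).card
      = ((FF b n (s+1)).sigma (fun p => p.1)).card := h1.symm
    _ = ((FF b n s).sigma (fun p => extF b p)).card := rec_card hb n s
    _ = (FF b n s).card * (n * Nat.choose (n - (b-1)*s - 1) (b-1)) := h2

lemma reaches_empty {x y : Fin n} (h : reaches (∅ : Finset (Finset (Fin n))) x y) : x = y := by
  induction h with
  | refl => rfl
  | tail _ hl ih => obtain ⟨g, hg, _⟩ := hl; simp at hg

theorem FF_zero (b n : ℕ) : FF b n 0 = {((∅ : Finset (Finset (Fin n))), (Finset.univ : Finset (Fin n)))} := by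
  ext p
  rw [mem_FF, Finset.mem_singleton]
  constructor
  · rintro ⟨hF, hcard⟩
    have hE : p.1 = ∅ := Finset.card_eq_zero.1 hcard
    have hR : p.2 = Finset.univ := by
      apply Finset.eq_univ_of_forall
      intro v
      obtain ⟨r, ⟨hrR, hr⟩, _⟩ := hF.2.1 v
      have : r = v := by
        rw [hE] at hr
        exact reaches_empty hr
      exact this ▸ hrR
    rw [Prod.ext_iff]
    exact ⟨hE, hR⟩
  · rintro rfl
    have hforest : IsForestRHT b (∅ : Finset (Finset (Fin n))) (Finset.univ : Finset (Fin n)) := by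
      refine ⟨fun e he => by simp at he, fun v => ?_, fun r _ => ?_⟩
      · exact ⟨v, ⟨Finset.mem_univ v, reaches_refl v⟩, fun r hr => reaches_empty hr.2⟩
      · have h1 : comp (∅ : Finset (Finset (Fin n))) r = {r} := by
          ext w
          simp only [mem_comp, Finset.mem_singleton]
          constructor
          · intro h; exact (reaches_empty h).symm
          · intro h; rw [h]; exact reaches_refl _
        have h2 : edgesIn (∅ : Finset (Finset (Fin n))) ({r} : Finset (Fin n)) = ∅ := by
          simp [edgesIn]
        rw [compEdges_eq, compSize_eq, h1, h2]
        simp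
    exact ⟨hforest, by simp⟩


/-! ### Closed form -/

theorem FF_card_eq (hb : 2 ≤ b) : ∀ s j n : ℕ, n = s*(b-1) + j + 1 →
    ((FF b n s).card : ℚ) * (s.factorial * ((b-1).factorial : ℚ)^s * j.factorial)
      = (n : ℚ)^s * ((n-1).factorial : ℚ) := by
  intro s
  induction s with
  | zero =>
    intro j n hn
    have h1 : (FF b n 0).card = 1 := by rw [FF_zero]; rfl
    have h2 : n - 1 = j := by omega
    rw [h1, h2]
    simp [Nat.factorial_zero]
  | succ s IH =>
    intro j n hn
    have hsm : (s+1)*(b-1) = s*(b-1) + (b-1) := Nat.succ_mul s (b-1)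
    have hn' : n = s*(b-1) + (j + (b-1)) + 1 := by omega
    have hIH := IH (j + (b-1)) n hn'
    have hrec := recurrence hb n s
    have hj' : n - (b-1)*s - 1 = j + (b-1) := by
      have h := Nat.mul_comm (b-1) s
      omega
    rw [hj'] at hrec
    have hcast : ((s:ℚ)+1) * ((FF b n (s+1)).card : ℚ)
        = ((FF b n s).card : ℚ) * ((n:ℚ) * ((j+(b-1)).choose (b-1) : ℚ)) := by
      exact_mod_cast hrec
    have hchoose : ((j+(b-1)).choose (b-1) : ℚ) * ((b-1).factorial : ℚ) * (j.factorial : ℚ)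
        = ((j+(b-1)).factorial : ℚ) := by
      have h := Nat.choose_mul_factorial_mul_factorial (Nat.le_add_left (b-1) j)
      have h2 : j + (b-1) - (b-1) = j := by omega
      rw [h2] at h
      exact_mod_cast h
    have hfact : ((s+1).factorial : ℚ) = ((s:ℚ)+1) * (s.factorial : ℚ) := by
      rw [Nat.factorial_succ]
      push_cast
      ring
    have hs1 : ((s:ℚ)+1) ≠ 0 := by positivity
    apply mul_left_cancel₀ hs1
    calc ((s:ℚ)+1) * (((FF b n (s+1)).card : ℚ) *
          ((s+1).factorial * ((b-1).factorial : ℚ)^(s+1) * j.factorial))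
        = (((s:ℚ)+1) * ((FF b n (s+1)).card : ℚ)) *
          ((s+1).factorial * ((b-1).factorial : ℚ)^(s+1) * j.factorial) := by ring
      _ = (((FF b n s).card : ℚ) * ((n:ℚ) * ((j+(b-1)).choose (b-1) : ℚ))) *
          ((s+1).factorial * ((b-1).factorial : ℚ)^(s+1) * j.factorial) := by rw [hcast]
      _ = ((s:ℚ)+1) * ((n:ℚ) * (((FF b n s).card : ℚ) *
          (s.factorial * ((b-1).factorial : ℚ)^s * ((j+(b-1)).factorial : ℚ)))) := by
          rw [hfact, ← hchoose]
          ring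
      _ = ((s:ℚ)+1) * ((n:ℚ) * ((n:ℚ)^s * ((n-1).factorial : ℚ))) := by rw [hIH]
      _ = ((s:ℚ)+1) * ((n:ℚ)^(s+1) * ((n-1).factorial : ℚ)) := by ring

end HT

/-- The number of forests of `(k+1)` rooted `b`-uniform hypertrees with `s`
hyperedges on `n = s(b-1)+k+1` labeled vertices equals
`C(n, k+1)·(k+1)·((n-k-1)!/((b-1)!^s·s!))·n^{s-1}`. -/
theorem forests_of_rooted_hypertrees_count (b k s n : ℕ) (hb : 2 ≤ b)
    (hn : n = s * (b - 1) + k + 1) :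
    (Nat.card {p : Finset (Finset (Fin n)) × Finset (Fin n) //
        IsForestRHT b p.1 p.2 ∧ p.1.card = s ∧ p.2.card = k + 1} : ℚ)
      = (n.choose (k + 1) : ℚ) * (k + 1) *
        (Nat.factorial (n - k - 1) : ℚ) / ((Nat.factorial (b - 1) : ℚ) ^ s * (Nat.factorial s : ℚ)) * (n : ℚ) ^ ((s : ℤ) - 1) := by
  have hsm : s * (b-1) = (b-1) * s := Nat.mul_comm _ _
  have hn1 : 1 ≤ n := by omega
  -- identify the Nat.card with the Finset count
  have hiff : ∀ p : Finset (Finset (Fin n)) × Finset (Fin n),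
      (IsForestRHT b p.1 p.2 ∧ p.1.card = s ∧ p.2.card = k + 1)
        ↔ (IsForestRHT b p.1 p.2 ∧ p.1.card = s) := by
    intro p
    constructor
    · rintro ⟨h1, h2, _⟩; exact ⟨h1, h2⟩
    · rintro ⟨h1, h2⟩
      refine ⟨h1, h2, ?_⟩
      have h := HT.forest_count (show 1 ≤ b by omega) h1
      rw [h2] at h
      omega
  have hNat : Nat.card {p : Finset (Finset (Fin n)) × Finset (Fin n) //
      IsForestRHT b p.1 p.2 ∧ p.1.card = s ∧ p.2.card = k + 1} = (HT.FF b n s).card := by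
    rw [Nat.card_congr (Equiv.subtypeEquivRight hiff)]
    have h1 : Nat.card {p : Finset (Finset (Fin n)) × Finset (Fin n) //
        IsForestRHT b p.1 p.2 ∧ p.1.card = s}
        = ({p : Finset (Finset (Fin n)) × Finset (Fin n) |
            IsForestRHT b p.1 p.2 ∧ p.1.card = s} : Set _).ncard :=
      Nat.card_coe_set_eq _
    rw [h1, Set.ncard_eq_toFinset_card _ (Set.toFinite _)]
    rfl
  rw [hNat]
  -- arithmetic
  have hFF := HT.FF_card_eq hb s k n (by omega)
  have hkn : k + 1 ≤ n := by omega
  have hnk : n - k - 1 = s * (b-1) := by omega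
  have hkey : (n.choose (k+1) : ℚ) * ((k:ℚ)+1) * ((n-k-1).factorial : ℚ) * (k.factorial : ℚ)
      = (n.factorial : ℚ) := by
    have h := Nat.choose_mul_factorial_mul_factorial hkn
    have h2 : n - (k+1) = n - k - 1 := by omega
    rw [h2, Nat.factorial_succ] at h
    have h' : (n.choose (k+1) : ℚ) * (((k:ℚ)+1) * (k.factorial:ℚ)) * ((n-k-1).factorial:ℚ)
        = (n.factorial:ℚ) := by exact_mod_cast h
    linear_combination h'
  have hfact : (n.factorial : ℚ) = (n:ℚ) * ((n-1).factorial : ℚ) := by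
    exact_mod_cast (Nat.mul_factorial_pred (by omega)).symm
  have hn0 : (n:ℚ) ≠ 0 := Nat.cast_ne_zero.2 (by omega)
  rw [zpow_sub₀ hn0, zpow_one, zpow_natCast, div_mul_div_comm,
    eq_div_iff (by
      apply mul_ne_zero
      · apply mul_ne_zero
        · exact pow_ne_zero _ (Nat.cast_ne_zero.2 (Nat.factorial_ne_zero _))
        · exact Nat.cast_ne_zero.2 (Nat.factorial_ne_zero _)
      · exact hn0)]
  apply mul_right_cancel₀ (show (k.factorial:ℚ) ≠ 0 from
    Nat.cast_ne_zero.2 (Nat.factorial_ne_zero _))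
  linear_combination (n:ℚ) * hFF - ((n:ℚ)^s) * hkey - ((n:ℚ)^s) * hfact
end

section
/- The number of rooted b-uniform hypertrees with s hyperedges and n = s(b-1)+1 labeled vertices equals ((n-1)! / (((b-1)!)^s · s!)) · n^s. -/
/-- Connectedness: every vertex is reachable from every other. -/
def Connected {n : ℕ} (E : Finset (Finset (Fin n))) : Prop :=
  ∀ x y : Fin n, Relation.ReflTransGen (link E) x y

/-- A `b`-uniform hypertree on `Fin n`: connected of excess `-1`. -/
def IsHypertree {n : ℕ} (b : ℕ) (E : Finset (Finset (Fin n))) : Prop :=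
  Uniform b E ∧ Connected E ∧ (b - 1) * E.card + 1 = n

open Finset

namespace HTP
variable {n : ℕ}

def conn (E : Finset (Finset (Fin n))) : Fin n → Fin n → Prop :=
  Relation.ReflTransGen (link E)

lemma link_symm {E : Finset (Finset (Fin n))} {x y : Fin n} (h : link E x y) : link E y x := by
  obtain ⟨e, he, hx, hy⟩ := h; exact ⟨e, he, hy, hx⟩

lemma conn_refl (E : Finset (Finset (Fin n))) (x : Fin n) : conn E x x :=
  Relation.ReflTransGen.refl

lemma conn_symm {E : Finset (Finset (Fin n))} {x y : Fin n} (h : conn E x y) : conn E y x :=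
  @Std.Symm.symm _ _ (@Relation.ReflTransGen.symmetric _ _ ⟨fun _ _ hl => link_symm hl⟩) _ _ h

lemma conn_trans {E : Finset (Finset (Fin n))} {x y z : Fin n}
    (h : conn E x y) (h' : conn E y z) : conn E x z := h.trans h'

lemma conn_mono {E F : Finset (Finset (Fin n))} (hEF : E ⊆ F) {x y : Fin n}
    (h : conn E x y) : conn F x y :=
  Relation.ReflTransGen.mono (fun _ _ ⟨e, he, h1, h2⟩ => ⟨e, hEF he, h1, h2⟩) _ _ h

lemma conn_of_mem {E : Finset (Finset (Fin n))} {e : Finset (Fin n)} (he : e ∈ E)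
    {x y : Fin n} (hx : x ∈ e) (hy : y ∈ e) : conn E x y :=
  Relation.ReflTransGen.single ⟨e, he, hx, hy⟩

noncomputable def cls (E : Finset (Finset (Fin n))) (v : Fin n) : Finset (Fin n) :=
  @Finset.filter _ (fun w => conn E v w) (Classical.decPred _) univ

lemma mem_cls {E : Finset (Finset (Fin n))} {v w : Fin n} : w ∈ cls E v ↔ conn E v w := by
  simp [cls]

lemma cls_eq_of_conn {E : Finset (Finset (Fin n))} {v w : Fin n} (h : conn E v w) :
    cls E v = cls E w := by
  ext z
  simp only [mem_cls]
  exact ⟨fun hz => (conn_symm h).trans hz, fun hz => h.trans hz⟩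

lemma conn_of_cls_eq {E : Finset (Finset (Fin n))} {v w : Fin n} (h : cls E v = cls E w) :
    conn E v w := by
  have : w ∈ cls E w := mem_cls.2 (conn_refl E w)
  rw [← h] at this
  exact mem_cls.1 this

lemma cls_eq_iff_conn {E : Finset (Finset (Fin n))} {v w : Fin n} :
    cls E v = cls E w ↔ conn E v w := ⟨conn_of_cls_eq, cls_eq_of_conn⟩

noncomputable def comps (E : Finset (Finset (Fin n))) : Finset (Finset (Fin n)) :=
  univ.image (cls E)

noncomputable def ncomp (E : Finset (Finset (Fin n))) : ℕ := (comps E).card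

lemma cls_mem_comps (E : Finset (Finset (Fin n))) (v : Fin n) : cls E v ∈ comps E :=
  mem_image_of_mem _ (mem_univ v)

lemma ncomp_empty : ncomp (∅ : Finset (Finset (Fin n))) = n := by
  have h1 : ∀ v w : Fin n, conn ∅ v w ↔ v = w := by
    intro v w
    constructor
    · intro h
      induction h with
      | refl => rfl
      | tail _ hl ih => obtain ⟨e, he, -⟩ := hl; simp at he
    · rintro rfl; exact conn_refl _ _
  have h2 : ∀ v : Fin n, cls ∅ v = {v} := by
    intro v; ext w; simp [mem_cls, h1, eq_comm]
  unfold ncomp comps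
  rw [show (cls (∅ : Finset (Finset (Fin n)))) = (fun v => ({v} : Finset (Fin n))) from funext h2]
  rw [card_image_of_injective _ (fun a b hab => by simpa using hab)]
  simp

lemma ncomp_connected {E : Finset (Finset (Fin n))} (h : Connected E) (hn : 0 < n) :
    ncomp E = 1 := by
  have h2 : ∀ v : Fin n, cls E v = univ := by
    intro v; ext w; simp [mem_cls]; exact h v w
  unfold ncomp comps
  rw [show (cls E) = (fun _ : Fin n => (univ : Finset (Fin n))) from funext h2]
  rw [Finset.image_const ⟨⟨0, hn⟩, mem_univ _⟩]
  simp

/-- Crossing lemma: a path in `insert e F` either stays an `F`-path or first hits `e`. -/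
lemma conn_insert_cases {F : Finset (Finset (Fin n))} {e : Finset (Fin n)} {v w : Fin n}
    (h : conn (insert e F) v w) : conn F v w ∨ ∃ x ∈ e, conn F v x := by
  induction h with
  | refl => exact Or.inl (conn_refl _ _)
  | tail _ hl ih =>
    rename_i c' w' hcw
    obtain ⟨e', he', h1, h2⟩ := hl
    rcases ih with ih | ih
    · rcases mem_insert.1 he' with rfl | he'
      · exact Or.inr ⟨c', h1, ih⟩
      · exact Or.inl (ih.trans (conn_of_mem he' h1 h2))
    · exact Or.inr ih

lemma ncomp_le_insert {F : Finset (Finset (Fin n))} {e : Finset (Fin n)} :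
    ncomp (insert e F) ≤ ncomp F := by
  apply Finset.card_le_card_of_surjOn
    (fun c => @Finset.filter _ (fun w => ∃ v ∈ c, conn (insert e F) v w)
      (Classical.decPred _) univ)
  intro c hc
  simp only [comps, coe_image, Set.mem_image, mem_coe, mem_univ] at hc ⊢
  obtain ⟨v, -, rfl⟩ := hc
  refine ⟨cls F v, ⟨v, trivial, rfl⟩, ?_⟩
  ext w
  simp only [Finset.mem_filter, mem_univ, true_and, mem_cls]
  constructor
  · rintro ⟨x, hx, hxw⟩
    exact (conn_mono (subset_insert e F) hx).trans hxw
  · intro h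
    exact ⟨v, conn_refl F v, h⟩

/-- Classes avoiding `e` are preserved when `e` is added. -/
lemma cls_insert_of_avoid {F : Finset (Finset (Fin n))} {e : Finset (Fin n)} {v : Fin n}
    (hav : ∀ x ∈ e, ¬ conn F v x) : cls (insert e F) v = cls F v := by
  ext w
  simp only [mem_cls]
  constructor
  · intro h
    rcases conn_insert_cases h with h | ⟨x, hx, hvx⟩
    · exact h
    · exact absurd hvx (hav x hx)
  · exact conn_mono (subset_insert e F)

lemma ncomp_insert_lb {F : Finset (Finset (Fin n))} {e : Finset (Fin n)} (he : e.Nonempty) :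
    ncomp F + 1 ≤ ncomp (insert e F) + e.card := by
  classical
  set A : Finset (Finset (Fin n)) :=
    (comps F).filter (fun c => ∀ x ∈ e, x ∉ c) with hA
  have hAsub : A ⊆ comps (insert e F) := by
    intro c hc
    simp only [hA, mem_filter] at hc
    obtain ⟨hc1, hc2⟩ := hc
    obtain ⟨v, -, rfl⟩ := mem_image.1 hc1
    rw [← cls_insert_of_avoid (fun x hx hvx => hc2 x hx (mem_cls.2 hvx))]
    exact cls_mem_comps _ _
  have hcover : comps F ⊆ A ∪ e.image (cls F) := by
    intro c hc
    by_cases hce : ∀ x ∈ e, x ∉ c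
    · exact mem_union_left _ (mem_filter.2 ⟨hc, hce⟩)
    · push_neg at hce
      obtain ⟨x, hx, hxc⟩ := hce
      obtain ⟨v, -, rfl⟩ := mem_image.1 hc
      refine mem_union_right _ (mem_image.2 ⟨x, hx, ?_⟩)
      exact (cls_eq_of_conn (mem_cls.1 hxc)).symm
  have hx0 := he.choose_spec
  have hnotinA : cls (insert e F) he.choose ∉ A := by
    simp only [hA, mem_filter]
    rintro ⟨-, h2⟩
    exact h2 he.choose hx0 (mem_cls.2 (conn_refl _ _))
  have h1 : A.card + 1 ≤ ncomp (insert e F) := by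
    have : insert (cls (insert e F) he.choose) A ⊆ comps (insert e F) := by
      intro c hc
      rcases mem_insert.1 hc with rfl | hc
      · exact cls_mem_comps _ _
      · exact hAsub hc
    calc A.card + 1 = (insert (cls (insert e F) he.choose) A).card := by
          rw [card_insert_of_notMem hnotinA]
      _ ≤ _ := card_le_card this
  calc ncomp F + 1 ≤ (A ∪ e.image (cls F)).card + 1 := by
        exact Nat.add_le_add_right (card_le_card hcover) 1
    _ ≤ A.card + (e.image (cls F)).card + 1 := Nat.add_le_add_right (card_union_le _ _) 1
    _ ≤ A.card + e.card + 1 := by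
        exact Nat.add_le_add_right (Nat.add_le_add_left (card_image_le) _) 1
    _ = (A.card + 1) + e.card := by ring
    _ ≤ ncomp (insert e F) + e.card := Nat.add_le_add_right h1 _

/-- Strict version: if two distinct vertices of `e` are already `F`-connected. -/
lemma ncomp_insert_lb_strict {F : Finset (Finset (Fin n))} {e : Finset (Fin n)}
    {x y : Fin n} (hx : x ∈ e) (hy : y ∈ e) (hxy : x ≠ y) (hconn : conn F x y) :
    ncomp F + 2 ≤ ncomp (insert e F) + e.card := by
  classical
  set A : Finset (Finset (Fin n)) :=
    (comps F).filter (fun c => ∀ x ∈ e, x ∉ c) with hA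
  have hAsub : A ⊆ comps (insert e F) := by
    intro c hc
    simp only [hA, mem_filter] at hc
    obtain ⟨hc1, hc2⟩ := hc
    obtain ⟨v, -, rfl⟩ := mem_image.1 hc1
    rw [← cls_insert_of_avoid (fun x hx hvx => hc2 x hx (mem_cls.2 hvx))]
    exact cls_mem_comps _ _
  have hcover : comps F ⊆ A ∪ (e.erase y).image (cls F) := by
    intro c hc
    by_cases hce : ∀ x ∈ e, x ∉ c
    · exact mem_union_left _ (mem_filter.2 ⟨hc, hce⟩)
    · push_neg at hce
      obtain ⟨z, hz, hzc⟩ := hce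
      obtain ⟨v, -, rfl⟩ := mem_image.1 hc
      by_cases hzy : z = y
      · refine mem_union_right _ (mem_image.2 ⟨x, mem_erase.2 ⟨hxy, hx⟩, ?_⟩)
        subst hzy
        rw [cls_eq_of_conn hconn]
        exact (cls_eq_of_conn (mem_cls.1 hzc)).symm
      · refine mem_union_right _ (mem_image.2 ⟨z, mem_erase.2 ⟨hzy, hz⟩, ?_⟩)
        exact (cls_eq_of_conn (mem_cls.1 hzc)).symm
  have hnotinA : cls (insert e F) x ∉ A := by
    simp only [hA, mem_filter]
    rintro ⟨-, h2⟩
    exact h2 x hx (mem_cls.2 (conn_refl _ _))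
  have h1 : A.card + 1 ≤ ncomp (insert e F) := by
    have : insert (cls (insert e F) x) A ⊆ comps (insert e F) := by
      intro c hc
      rcases mem_insert.1 hc with rfl | hc
      · exact cls_mem_comps _ _
      · exact hAsub hc
    calc A.card + 1 = (insert (cls (insert e F) x) A).card := by
          rw [card_insert_of_notMem hnotinA]
      _ ≤ _ := card_le_card this
  have hecard : (e.erase y).card + 1 = e.card := by
    rw [card_erase_of_mem hy]
    have : 0 < e.card := card_pos.2 ⟨y, hy⟩
    omega
  calc ncomp F + 2 ≤ (A ∪ (e.erase y).image (cls F)).card + 2 :=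
        Nat.add_le_add_right (card_le_card hcover) 2
    _ ≤ A.card + ((e.erase y).image (cls F)).card + 2 :=
        Nat.add_le_add_right (card_union_le _ _) 2
    _ ≤ A.card + (e.erase y).card + 2 :=
        Nat.add_le_add_right (Nat.add_le_add_left (card_image_le) _) 2
    _ = (A.card + 1) + ((e.erase y).card + 1) := by ring
    _ ≤ ncomp (insert e F) + e.card := by
        rw [hecard] at *
        exact Nat.add_le_add h1 (le_of_eq rfl)

end HTP

namespace HTP2
open HTP
variable {n : ℕ}

lemma ncomp_lb_uniform {b : ℕ} (hb : 2 ≤ b) :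
    ∀ F : Finset (Finset (Fin n)), (∀ e ∈ F, e.card = b) →
    n ≤ ncomp F + (b-1) * F.card := by
  intro F
  induction F using Finset.induction_on with
  | empty => intro _; simp [ncomp_empty]
  | @insert e F heF ih =>
    intro hU
    have hcb : e.card = b := hU e (mem_insert_self e F)
    have hene : e.Nonempty := card_pos.1 (by omega)
    have h1 := ih (fun f hf => hU f (mem_insert_of_mem hf))
    have h2 := ncomp_insert_lb (F := F) hene
    rw [hcb] at h2
    rw [card_insert_of_notMem heF, Nat.mul_add, Nat.mul_one]
    omega

lemma ncomp_ub_union {b : ℕ} (hb : 2 ≤ b) :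
    ∀ G F : Finset (Finset (Fin n)), (∀ e ∈ G, e.card = b) →
    ncomp F ≤ ncomp (F ∪ G) + (b-1) * G.card := by
  intro G
  induction G using Finset.induction_on with
  | empty => intro F _; simp
  | @insert e G heG ih =>
    intro F hU
    have hcb : e.card = b := hU e (mem_insert_self e G)
    have hene : e.Nonempty := card_pos.1 (by omega)
    have h1 := ih F (fun f hf => hU f (mem_insert_of_mem hf))
    have h2 := ncomp_insert_lb (F := F ∪ G) hene
    rw [hcb] at h2
    rw [Finset.union_insert, card_insert_of_notMem heG, Nat.mul_add, Nat.mul_one]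
    omega

lemma tree_ncomp_eq {b : ℕ} (hb : 2 ≤ b) {E : Finset (Finset (Fin n))}
    (hE : IsHypertree b E) (F : Finset (Finset (Fin n))) (hFE : F ⊆ E) :
    ncomp F + (b-1) * F.card = n := by
  have h1 := ncomp_lb_uniform hb F (fun e he => hE.1 e (hFE he))
  have h2 := ncomp_ub_union hb (E \ F) F (fun e he => hE.1 e (mem_sdiff.1 he).1)
  rw [Finset.union_sdiff_of_subset hFE] at h2
  have hn0 : 0 < n := by have := hE.2.2; omega
  have h3 : ncomp E = 1 := ncomp_connected hE.2.1 hn0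
  have h4 : (E \ F).card = E.card - F.card := card_sdiff_of_subset hFE
  have h5 := hE.2.2
  have hle : F.card ≤ E.card := card_le_card hFE
  have hmul : (b-1) * E.card = (b-1) * F.card + (b-1) * (E.card - F.card) := by
    rw [← Nat.mul_add]; congr 1; omega
  rw [h4] at h2
  omega

variable {b : ℕ} {E : Finset (Finset (Fin n))}

lemma ncomp_erase (hb : 2 ≤ b) (hE : IsHypertree b E) {e : Finset (Fin n)} (he : e ∈ E) :
    ncomp (E.erase e) = b := by
  have h1 := tree_ncomp_eq hb hE (E.erase e) (erase_subset e E)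
  have h2 : (E.erase e).card = E.card - 1 := card_erase_of_mem he
  have h3 : 1 ≤ E.card := card_pos.2 ⟨e, he⟩
  have h5 := hE.2.2
  have hmul : (b-1) * E.card = (b-1) * (E.card - 1) + (b-1) := by
    rw [← Nat.mul_succ]; congr 1; omega
  rw [h2] at h1
  omega

lemma erase_not_conn (hb : 2 ≤ b) (hE : IsHypertree b E) {e : Finset (Fin n)} (he : e ∈ E)
    {x y : Fin n} (hx : x ∈ e) (hy : y ∈ e) (hxy : x ≠ y) :
    ¬ conn (E.erase e) x y := by
  intro hc
  have h2 := ncomp_insert_lb_strict hx hy hxy hc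
  rw [insert_erase he] at h2
  have h3 : ncomp E = 1 := ncomp_connected hE.2.1 (by have := hE.2.2; omega)
  have h4 := ncomp_erase hb hE he
  have h5 : e.card = b := hE.1 e he
  omega

lemma comps_erase_eq (hb : 2 ≤ b) (hE : IsHypertree b E) {e : Finset (Fin n)} (he : e ∈ E) :
    comps (E.erase e) = e.image (cls (E.erase e)) := by
  have hinj : Set.InjOn (cls (E.erase e)) e := by
    intro x hx y hy hcls
    by_contra hxy
    exact erase_not_conn hb hE he hx hy hxy (conn_of_cls_eq hcls)
  refine (eq_of_subset_of_card_le ?_ ?_).symm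
  · intro c hc
    obtain ⟨x, -, rfl⟩ := mem_image.1 hc
    exact cls_mem_comps _ _
  · rw [card_image_of_injOn hinj, hE.1 e he]
    exact le_of_eq (ncomp_erase hb hE he)

lemma parent_exists_unique (hb : 2 ≤ b) (hE : IsHypertree b E) {e : Finset (Fin n)}
    (he : e ∈ E) (ρ : Fin n) :
    ∃! x, x ∈ e ∧ conn (E.erase e) x ρ := by
  have h1 : cls (E.erase e) ρ ∈ comps (E.erase e) := cls_mem_comps _ _
  rw [comps_erase_eq hb hE he] at h1
  obtain ⟨x, hx, hcls⟩ := mem_image.1 h1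
  refine ⟨x, ⟨hx, conn_of_cls_eq hcls⟩, ?_⟩
  rintro y ⟨hy, hconn⟩
  by_contra hxy
  exact erase_not_conn hb hE he hy hx hxy (hconn.trans (conn_symm (conn_of_cls_eq hcls)))

open Classical in
noncomputable def par (E : Finset (Finset (Fin n))) (ρ : Fin n) (e : Finset (Fin n)) : Fin n :=
  if h : ∃ x, x ∈ e ∧ conn (E.erase e) x ρ then h.choose else ρ

lemma par_spec (hb : 2 ≤ b) (hE : IsHypertree b E) {e : Finset (Fin n)} (he : e ∈ E)
    (ρ : Fin n) : par E ρ e ∈ e ∧ conn (E.erase e) (par E ρ e) ρ := by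
  obtain ⟨x, hx, -⟩ := parent_exists_unique hb hE he ρ
  have hex : ∃ y, y ∈ e ∧ conn (E.erase e) y ρ := ⟨x, hx⟩
  rw [par, dif_pos hex]
  exact hex.choose_spec

lemma par_eq (hb : 2 ≤ b) (hE : IsHypertree b E) {e : Finset (Fin n)} (he : e ∈ E)
    {ρ x : Fin n} (hx : x ∈ e) (hconn : conn (E.erase e) x ρ) : x = par E ρ e := by
  obtain ⟨z, hz, huniq⟩ := parent_exists_unique hb hE he ρ
  rw [huniq x ⟨hx, hconn⟩, huniq _ (par_spec hb hE he ρ)]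

lemma child_unique (hb : 2 ≤ b) (hE : IsHypertree b E) {e e' : Finset (Fin n)}
    (he : e ∈ E) (he' : e' ∈ E) {ρ v : Fin n} (hv : v ∈ e) (hv' : v ∈ e')
    (hc : ¬ conn (E.erase e) v ρ) (hc' : ¬ conn (E.erase e') v ρ) : e = e' := by
  by_contra hne
  have heE' : e ∈ E.erase e' := mem_erase.2 ⟨hne, he⟩
  have he'E : e' ∈ E.erase e := mem_erase.2 ⟨Ne.symm hne, he'⟩
  set F₂ := (E.erase e).erase e' with hF2def
  have hF2e : F₂ ⊆ E.erase e := erase_subset _ _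
  have hF2e' : F₂ ⊆ E.erase e' := by
    intro f hf
    rw [hF2def, mem_erase, mem_erase] at hf
    exact mem_erase.2 ⟨hf.1, hf.2.2⟩
  have hF2E : F₂ ⊆ E := hF2e.trans (erase_subset _ _)
  have hc2 : 2 ≤ E.card := one_lt_card.2 ⟨e, he, e', he', hne⟩
  have hncomp : ncomp F₂ = 2*b - 1 := by
    have h1 := tree_ncomp_eq hb hE F₂ hF2E
    have h2 : F₂.card = E.card - 2 := by
      rw [hF2def, card_erase_of_mem he'E, card_erase_of_mem he]
      omega
    have h5 := hE.2.2
    have hmul : (b-1) * E.card = (b-1) * (E.card - 2) + (b-1) * 2 := by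
      rw [← Nat.mul_add]; congr 1; omega
    rw [h2] at h1
    omega
  -- injectivity of classes on e and e'
  have hinj : Set.InjOn (cls F₂) e := by
    intro x hx y hy hcls
    by_contra hxy
    exact erase_not_conn hb hE he hx hy hxy (conn_mono hF2e (conn_of_cls_eq hcls))
  have hinj' : Set.InjOn (cls F₂) e' := by
    intro x hx y hy hcls
    by_contra hxy
    exact erase_not_conn hb hE he' hx hy hxy (conn_mono hF2e' (conn_of_cls_eq hcls))
  -- ρ's class is in neither image
  have hR : cls F₂ ρ ∉ e.image (cls F₂) := by
    intro hmem
    obtain ⟨x, hx, hcls⟩ := mem_image.1 hmem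
    have hconn : conn (E.erase e') x ρ := conn_mono hF2e' (conn_of_cls_eq hcls)
    have hvx : conn (E.erase e') v x := by
      rcases eq_or_ne v x with rfl | hvx
      · exact conn_refl _ _
      · exact conn_of_mem heE' hv hx
    exact hc' (hvx.trans hconn)
  have hR' : cls F₂ ρ ∉ e'.image (cls F₂) := by
    intro hmem
    obtain ⟨x, hx, hcls⟩ := mem_image.1 hmem
    have hconn : conn (E.erase e) x ρ := conn_mono hF2e (conn_of_cls_eq hcls)
    have hvx : conn (E.erase e) v x := by
      rcases eq_or_ne v x with rfl | hvx
      · exact conn_refl _ _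
      · exact conn_of_mem he'E hv' hx
    exact hc (hvx.trans hconn)
  -- counting: the two images intersect in at least 2 classes
  have hsubc : insert (cls F₂ ρ) (e.image (cls F₂) ∪ e'.image (cls F₂)) ⊆ comps F₂ := by
    intro c hcm
    rcases mem_insert.1 hcm with rfl | hcm
    · exact cls_mem_comps _ _
    · rcases mem_union.1 hcm with hcm | hcm <;>
      · obtain ⟨x, -, rfl⟩ := mem_image.1 hcm
        exact cls_mem_comps _ _
  have hcard_union : (e.image (cls F₂) ∪ e'.image (cls F₂)).card + 1 ≤ 2*b - 1 := by
    rw [← hncomp]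
    calc (e.image (cls F₂) ∪ e'.image (cls F₂)).card + 1
        = (insert (cls F₂ ρ) (e.image (cls F₂) ∪ e'.image (cls F₂))).card := by
          rw [card_insert_of_notMem (fun hmem => by
            rcases mem_union.1 hmem with h | h
            · exact hR h
            · exact hR' h)]
      _ ≤ _ := card_le_card hsubc
  have hIcard : 2 ≤ ((e.image (cls F₂)) ∩ (e'.image (cls F₂))).card := by
    have h1 : (e.image (cls F₂) ∪ e'.image (cls F₂)).card
        + ((e.image (cls F₂)) ∩ (e'.image (cls F₂))).card
        = (e.image (cls F₂)).card + (e'.image (cls F₂)).card :=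
      card_union_add_card_inter _ _
    have h2 : (e.image (cls F₂)).card = b := by rw [card_image_of_injOn hinj, hE.1 e he]
    have h3 : (e'.image (cls F₂)).card = b := by rw [card_image_of_injOn hinj', hE.1 e' he']
    omega
  -- extract a shared class different from v's class
  obtain ⟨K₁, hK₁, K₂, hK₂, hK12⟩ := one_lt_card.1
    (show 1 < ((e.image (cls F₂)) ∩ (e'.image (cls F₂))).card by omega)
  have hKex : ∃ K ∈ (e.image (cls F₂)) ∩ (e'.image (cls F₂)), K ≠ cls F₂ v := by
    rcases eq_or_ne K₁ (cls F₂ v) with rfl | h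
    · exact ⟨K₂, hK₂, fun h => hK12 h.symm⟩
    · exact ⟨K₁, hK₁, h⟩
  obtain ⟨K, hK, hKv⟩ := hKex
  obtain ⟨hKe, hKe'⟩ := mem_inter.1 hK
  obtain ⟨x, hxe, hxK⟩ := mem_image.1 hKe
  obtain ⟨y, hye', hyK⟩ := mem_image.1 hKe'
  have hconnxy : conn F₂ x y := conn_of_cls_eq (hxK.trans hyK.symm)
  have hxv : x ≠ v := fun h => hKv (by rw [← hxK, h])
  have hyv : y ≠ v := fun h => hKv (by rw [← hyK, h])
  have hxyne : x ≠ y := by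
    rintro rfl
    -- x ∈ e ∩ e', x ≠ v : contradiction with erase_not_conn on e (x,v ∈ e, linked by e')
    exact erase_not_conn hb hE he hxe hv hxv (conn_of_mem he'E hye' hv')
  by_cases hyine : y ∈ e
  · exact erase_not_conn hb hE he hxe hyine hxyne (conn_mono hF2e hconnxy)
  · by_cases hxine' : x ∈ e'
    · exact erase_not_conn hb hE he' hxine' hye' hxyne (conn_mono hF2e' hconnxy)
    · -- v —e— x —F₂— y, all within E.erase e', contradicting v ≁ y in E.erase e'
      have h1 : conn (E.erase e') v x := conn_of_mem heE' hv hxe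
      have h2 : conn (E.erase e') x y := conn_mono hF2e' hconnxy
      exact erase_not_conn hb hE he' hv' hye' (Ne.symm hyv) (h1.trans h2)

noncomputable def chl (E : Finset (Finset (Fin n))) (ρ : Fin n) (e : Finset (Fin n)) :
    Finset (Fin n) := e.erase (par E ρ e)

lemma mem_chl_iff (hb : 2 ≤ b) (hE : IsHypertree b E) {e : Finset (Fin n)} (he : e ∈ E)
    {ρ v : Fin n} : v ∈ chl E ρ e ↔ v ∈ e ∧ ¬ conn (E.erase e) v ρ := by
  rw [chl, mem_erase]
  constructor
  · rintro ⟨hne, hv⟩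
    exact ⟨hv, fun hconn => hne (par_eq hb hE he hv hconn)⟩
  · rintro ⟨hv, hnc⟩
    refine ⟨fun heq => hnc ?_, hv⟩
    rw [heq]
    exact (par_spec hb hE he ρ).2

lemma rho_not_mem_chl (hb : 2 ≤ b) (hE : IsHypertree b E) {e : Finset (Fin n)} (he : e ∈ E)
    {ρ : Fin n} : ρ ∉ chl E ρ e := by
  rw [mem_chl_iff hb hE he]
  rintro ⟨-, hnc⟩
  exact hnc (conn_refl _ _)

lemma chl_card (hb : 2 ≤ b) (hE : IsHypertree b E) {e : Finset (Fin n)} (he : e ∈ E)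
    (ρ : Fin n) : (chl E ρ e).card = b - 1 := by
  rw [chl, card_erase_of_mem (par_spec hb hE he ρ).1, hE.1 e he]

lemma chl_partition (hb : 2 ≤ b) (hE : IsHypertree b E) (ρ : Fin n) :
    E.biUnion (chl E ρ) = univ.erase ρ := by
  have hdisj : ∀ e₁ ∈ E, ∀ e₂ ∈ E, e₁ ≠ e₂ → Disjoint (chl E ρ e₁) (chl E ρ e₂) := by
    intro e₁ h₁ e₂ h₂ hne
    rw [disjoint_left]
    intro v hv1 hv2
    rw [mem_chl_iff hb hE h₁] at hv1
    rw [mem_chl_iff hb hE h₂] at hv2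
    exact hne (child_unique hb hE h₁ h₂ hv1.1 hv2.1 hv1.2 hv2.2)
  apply eq_of_subset_of_card_le
  · intro v hv
    obtain ⟨e, he, hve⟩ := mem_biUnion.1 hv
    refine mem_erase.2 ⟨?_, mem_univ v⟩
    rintro rfl
    exact rho_not_mem_chl hb hE he hve
  · rw [card_biUnion hdisj]
    have : ∀ e ∈ E, (chl E ρ e).card = b - 1 := fun e he => chl_card hb hE he ρ
    rw [Finset.sum_congr rfl this, sum_const, smul_eq_mul]
    rw [card_erase_of_mem (mem_univ ρ), card_univ, Fintype.card_fin]
    have h5 := hE.2.2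
    have h6 : E.card * (b-1) = (b-1) * E.card := Nat.mul_comm _ _
    omega

lemma child_exists (hb : 2 ≤ b) (hE : IsHypertree b E) {ρ v : Fin n} (hv : v ≠ ρ) :
    ∃ e ∈ E, v ∈ chl E ρ e := by
  have : v ∈ univ.erase ρ := mem_erase.2 ⟨hv, mem_univ v⟩
  rw [← chl_partition hb hE ρ] at this
  exact mem_biUnion.1 this

end HTP2




namespace HTP
variable {n : ℕ}

abbrev Step (n : ℕ) := Fin n × Finset (Fin n)

def app (r : Fin n → Fin n) (p : Step n) : Fin n → Fin n :=
  fun v => if r v ∈ p.2 then r p.1 else r v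

def ok (b : ℕ) (r : Fin n → Fin n) (p : Step n) : Prop :=
  p.2.card = b - 1 ∧ (∀ v ∈ p.2, r v = v) ∧ r p.1 ∉ p.2

instance (b) (r : Fin n → Fin n) (p : Step n) : Decidable (ok b r p) := by
  unfold ok; infer_instance

def okSteps (b : ℕ) (r : Fin n → Fin n) : Finset (Step n) :=
  univ.filter (ok b r)

def seqs (b : ℕ) : ℕ → (Fin n → Fin n) → Finset (List (Step n))
  | 0, _ => {[]}
  | l+1, r => (okSteps b r).biUnion fun p => (seqs b l (app r p)).image (p :: ·)

def roots (r : Fin n → Fin n) : Finset (Fin n) := univ.filter (fun v => r v = v)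

def Idem (r : Fin n → Fin n) : Prop := ∀ v, r (r v) = r v

lemma mem_roots {r : Fin n → Fin n} {v : Fin n} : v ∈ roots r ↔ r v = v := by
  simp [roots]

lemma idem_app {b} {r : Fin n → Fin n} {p : Step n} (hok : ok b r p) (h : Idem r) :
    Idem (app r p) := by
  intro v
  simp only [app]
  by_cases hv : r v ∈ p.2
  · simp only [if_pos hv, h p.1, if_neg hok.2.2]
  · simp only [if_neg hv, h v]

lemma roots_app {b} {r : Fin n → Fin n} {p : Step n} (h : Idem r) (hok : ok b r p) :
    roots (app r p) = roots r \ p.2 := by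
  ext v
  simp only [mem_roots, mem_sdiff, app]
  by_cases hv : r v ∈ p.2
  · rw [if_pos hv]
    constructor
    · rintro rfl
      exact absurd (h p.1 ▸ hv) hok.2.2
    · rintro ⟨h1, h2⟩
      rw [h1] at hv; exact absurd hv h2
  · rw [if_neg hv]
    constructor
    · intro h1
      exact ⟨h1, fun hc => hv (by rw [h1]; exact hc)⟩
    · exact fun h => h.1

lemma okSteps_eq (b : ℕ) (r : Fin n → Fin n) :
    okSteps b r = univ.biUnion
      (fun u : Fin n => (powersetCard (b-1) ((roots r).erase (r u))).image (Prod.mk u)) := by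
  ext ⟨u, B⟩
  simp only [okSteps, mem_filter, mem_univ, true_and, mem_biUnion, mem_image,
    mem_powersetCard, Prod.mk.injEq]
  constructor
  · rintro ⟨h1, h2, h3⟩
    exact ⟨u, B, ⟨fun v hv => mem_erase.2
      ⟨fun hvu => h3 (hvu ▸ hv), mem_roots.2 (h2 v hv)⟩, h1⟩, rfl, rfl⟩
  · rintro ⟨u', B', ⟨hsub, hcard⟩, rfl, rfl⟩
    refine ⟨hcard, fun v hv => (mem_roots.1 (mem_of_mem_erase (hsub hv))), fun hru => ?_⟩
    exact (mem_erase.1 (hsub hru)).1 rfl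

lemma card_okSteps {b : ℕ} {r : Fin n → Fin n} (h : Idem r) :
    (okSteps b r).card = n * ((roots r).card - 1).choose (b-1) := by
  rw [okSteps_eq]
  rw [card_biUnion]
  · have : ∀ u : Fin n,
        ((powersetCard (b-1) ((roots r).erase (r u))).image (Prod.mk u)).card
          = ((roots r).card - 1).choose (b-1) := by
      intro u
      rw [card_image_of_injective _ (fun a b hab => by simpa using hab)]
      rw [card_powersetCard, card_erase_of_mem (mem_roots.2 (h u))]
    simp only [this, sum_const, card_univ, Fintype.card_fin, smul_eq_mul]
  · intro x _ y _ hxy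
    simp only [disjoint_left, mem_image]
    rintro a ⟨B, -, rfl⟩ ⟨B', -, hB'⟩
    exact hxy (congrArg Prod.fst hB').symm

lemma card_seqs {b : ℕ} :
    ∀ (l : ℕ) (r : Fin n → Fin n), Idem r →
    (seqs b l r).card = ∏ i ∈ range l, (n * (((roots r).card - 1 - i*(b-1)).choose (b-1))) := by
  intro l
  induction l with
  | zero => intro r _; simp [seqs]
  | succ l ih =>
    intro r hr
    rw [seqs, card_biUnion]
    · have hterm : ∀ p ∈ okSteps b r,
          ((seqs b l (app r p)).image (p :: ·)).card
            = ∏ i ∈ range l, (n * (((roots r).card - 1 - (i+1)*(b-1)).choose (b-1))) := by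
        intro p hp
        have hok : ok b r p := by simpa [okSteps] using hp
        rw [card_image_of_injective _ (fun a b hab => by simpa using hab)]
        rw [ih (app r p) (idem_app hok hr)]
        apply Finset.prod_congr rfl
        intro i _
        congr 2
        rw [roots_app hr hok]
        rw [card_sdiff_of_subset (by intro v hv; exact mem_roots.2 (hok.2.1 v hv))]
        rw [hok.1, add_mul, one_mul]
        omega
      rw [Finset.sum_congr rfl hterm, sum_const, card_okSteps hr, smul_eq_mul]
      rw [Finset.prod_range_succ']
      rw [mul_comm]
      congr 1
      simp
    · intro x hx y hy hxy
      simp only [disjoint_left, mem_image]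
      rintro a ⟨L, -, rfl⟩ ⟨L', -, hL'⟩
      exact hxy ((List.cons.inj hL').1).symm

end HTP

namespace HTP
variable {n : ℕ}

def edgeOf (p : Step n) : Finset (Fin n) := insert p.1 p.2

def Valid (b : ℕ) : (Fin n → Fin n) → List (Step n) → Prop
  | _, [] => True
  | r, p :: L => ok b r p ∧ Valid b (app r p) L

lemma mem_seqs {b l} {r : Fin n → Fin n} {L : List (Step n)} :
    L ∈ seqs b l r ↔ L.length = l ∧ Valid b r L := by
  induction l generalizing r L with
  | zero =>
    simp only [seqs, mem_singleton]
    constructor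
    · rintro rfl; exact ⟨rfl, trivial⟩
    · rintro ⟨h, -⟩; exact List.length_eq_zero_iff.1 h
  | succ l ih =>
    simp only [seqs, mem_biUnion, mem_image]
    constructor
    · rintro ⟨p, hp, M, hM, rfl⟩
      have hok : ok b r p := (mem_filter.1 hp).2
      obtain ⟨h1, h2⟩ := ih.1 hM
      exact ⟨by simp [h1], hok, h2⟩
    · rintro ⟨hlen, hval⟩
      cases L with
      | nil => simp at hlen
      | cons p M =>
        exact ⟨p, mem_filter.2 ⟨mem_univ _, hval.1⟩, M, ih.2 ⟨by simpa using hlen, hval.2⟩, rfl⟩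

def run (r : Fin n → Fin n) (L : List (Step n)) : Fin n → Fin n := L.foldl app r

@[simp] lemma run_nil (r : Fin n → Fin n) : run r [] = r := rfl

@[simp] lemma run_cons (r : Fin n → Fin n) (p : Step n) (L : List (Step n)) :
    run r (p :: L) = run (app r p) L := rfl

lemma app_eq_of_eq {r : Fin n → Fin n} {p : Step n} {v w : Fin n} (h : r v = r w) :
    app r p v = app r p w := by unfold app; rw [h]

lemma run_eq_of_eq {L : List (Step n)} :
    ∀ {r : Fin n → Fin n} {v w : Fin n}, r v = r w → run r L v = run r L w := by
  induction L with
  | nil => intro r v w h; exact h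
  | cons p L ih => intro r v w h; exact ih (app_eq_of_eq h)

def childU : List (Step n) → Finset (Fin n)
  | [] => ∅
  | p :: L => p.2 ∪ childU L

lemma run_idem {b} {L : List (Step n)} :
    ∀ {r : Fin n → Fin n}, Idem r → Valid b r L → Idem (run r L) := by
  induction L with
  | nil => intro r h _; exact h
  | cons p L ih => intro r h hV; exact ih (idem_app hV.1 h) hV.2

lemma roots_run {b} {L : List (Step n)} :
    ∀ {r : Fin n → Fin n}, Idem r → Valid b r L → roots (run r L) = roots r \ childU L := by
  induction L with
  | nil => intro r _ _; simp [childU]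
  | cons p L ih =>
    intro r h hV
    rw [run_cons, ih (idem_app hV.1 h) hV.2, roots_app h hV.1]
    ext v
    simp only [mem_sdiff, childU, mem_union]
    tauto

lemma childU_sub {b} {L : List (Step n)} :
    ∀ {r : Fin n → Fin n}, Idem r → Valid b r L → childU L ⊆ roots r := by
  induction L with
  | nil => intro r _ _; simp [childU]
  | cons p L ih =>
    intro r h hV
    intro v hv
    rcases mem_union.1 hv with hv | hv
    · exact mem_roots.2 (hV.1.2.1 v hv)
    · have := ih (idem_app hV.1 h) hV.2 hv
      rw [roots_app h hV.1] at this
      exact (mem_sdiff.1 this).1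

lemma childU_card {b} (hb : 2 ≤ b) {L : List (Step n)} :
    ∀ {r : Fin n → Fin n}, Idem r → Valid b r L → (childU L).card = L.length * (b-1) := by
  induction L with
  | nil => intro r _ _; simp [childU]
  | cons p L ih =>
    intro r h hV
    have hdisj : Disjoint p.2 (childU L) := by
      rw [disjoint_right]
      intro v hv
      have := childU_sub (idem_app hV.1 h) hV.2 hv
      rw [roots_app h hV.1, mem_sdiff] at this
      exact this.2
    rw [show childU (p :: L) = p.2 ∪ childU L from rfl,
      card_union_of_disjoint hdisj, hV.1.1, ih (idem_app hV.1 h) hV.2]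
    rw [List.length_cons, Nat.succ_mul]
    omega

lemma step_fst_not_mem {b} {r : Fin n → Fin n} {p : Step n} (hok : ok b r p) : p.1 ∉ p.2 :=
  fun h => hok.2.2 (by rw [hok.2.1 p.1 h]; exact h)

lemma edgeOf_card {b} (hb : 2 ≤ b) {r : Fin n → Fin n} {p : Step n} (hok : ok b r p) :
    (edgeOf p).card = b := by
  rw [edgeOf, card_insert_of_notMem (step_fst_not_mem hok), hok.1]
  omega

lemma edge_rconst {b} {r : Fin n → Fin n} {p : Step n} (hok : ok b r p) :
    ∀ v ∈ edgeOf p, app r p v = r p.1 := by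
  intro v hv
  rcases mem_insert.1 hv with rfl | hv
  · unfold app; rw [if_neg hok.2.2]
  · unfold app; rw [hok.2.1 v hv, if_pos hv]

lemma step_split {b} (hb : 2 ≤ b) {r : Fin n → Fin n} {p : Step n} (hok : ok b r p) :
    ∃ x ∈ edgeOf p, ∃ y ∈ edgeOf p, r x ≠ r y := by
  have hne : p.2.Nonempty := card_pos.1 (by rw [hok.1]; omega)
  obtain ⟨v, hv⟩ := hne
  refine ⟨p.1, mem_insert_self _ _, v, mem_insert_of_mem hv, ?_⟩
  rw [hok.2.1 v hv]
  exact fun h => hok.2.2 (h ▸ hv)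

lemma no_reuse {b} (hb : 2 ≤ b) (e : Finset (Fin n)) :
    ∀ (L : List (Step n)) (r : Fin n → Fin n), Idem r → Valid b r L →
    (∀ x ∈ e, ∀ y ∈ e, r x = r y) → e ∉ L.map edgeOf := by
  intro L
  induction L with
  | nil => intro r _ _ _ h; simp at h
  | cons q L ih =>
    intro r hI hV hconst hmem
    rcases List.mem_cons.1 hmem with heq | hmem
    · obtain ⟨x, hx, y, hy, hxy⟩ := step_split hb hV.1
      exact hxy (hconst x (heq ▸ hx) y (heq ▸ hy))
    · exact ih (app r q) (idem_app hV.1 hI) hV.2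
        (fun x hx y hy => app_eq_of_eq (hconst x hx y hy)) hmem

lemma edges_nodup {b} (hb : 2 ≤ b) :
    ∀ (L : List (Step n)) (r : Fin n → Fin n), Idem r → Valid b r L →
    (L.map edgeOf).Nodup := by
  intro L
  induction L with
  | nil => intro r _ _; simp
  | cons p L ih =>
    intro r hI hV
    rw [List.map_cons, List.nodup_cons]
    constructor
    · exact no_reuse hb (edgeOf p) L (app r p) (idem_app hV.1 hI) hV.2
        (fun x hx y hy => by rw [edge_rconst hV.1 x hx, edge_rconst hV.1 y hy])
    · exact ih (app r p) (idem_app hV.1 hI) hV.2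

def edges (L : List (Step n)) : Finset (Finset (Fin n)) := (L.map edgeOf).toFinset

lemma mem_edges {L : List (Step n)} {f : Finset (Fin n)} :
    f ∈ edges L ↔ ∃ p ∈ L, edgeOf p = f := by
  simp [edges, List.mem_map]

lemma edges_card {b} (hb : 2 ≤ b) {L : List (Step n)} {r : Fin n → Fin n}
    (hI : Idem r) (hV : Valid b r L) : (edges L).card = L.length := by
  rw [edges, List.toFinset_card_of_nodup (edges_nodup hb L r hI hV), List.length_map]

lemma conn_run {b} {E : Finset (Finset (Fin n))} :
    ∀ (L : List (Step n)) (r : Fin n → Fin n), Valid b r L →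
    (∀ f ∈ edges L, f ∈ E) → (∀ v, conn E v (r v)) → ∀ v, conn E v (run r L v) := by
  intro L
  induction L with
  | nil => intro r _ _ h v; exact h v
  | cons p L ih =>
    intro r hV hsub hr v
    rw [run_cons]
    refine ih (app r p) hV.2 (fun f hf => hsub f (by
      rw [mem_edges] at hf ⊢
      obtain ⟨q, hq, rfl⟩ := hf
      exact ⟨q, List.mem_cons_of_mem p hq, rfl⟩)) ?_ v
    intro w
    unfold app
    by_cases hw : r w ∈ p.2
    · rw [if_pos hw]
      have he : edgeOf p ∈ E := hsub _ (mem_edges.2 ⟨p, List.mem_cons_self, rfl⟩)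
      exact (hr w).trans ((conn_of_mem he (mem_insert_of_mem hw)
        (mem_insert_self _ _)).trans (hr p.1))
    · rw [if_neg hw]; exact hr w

lemma uniform_edges {b} (hb : 2 ≤ b) :
    ∀ (L : List (Step n)) (r : Fin n → Fin n), Valid b r L → ∀ f ∈ edges L, f.card = b := by
  intro L
  induction L with
  | nil => intro r _ f hf; simp [edges] at hf
  | cons p L ih =>
    intro r hV f hf
    rw [mem_edges] at hf
    obtain ⟨q, hq, rfl⟩ := hf
    rcases List.mem_cons.1 hq with rfl | hq
    · exact edgeOf_card hb hV.1
    · exact ih (app r p) hV.2 (edgeOf q) (mem_edges.2 ⟨q, hq, rfl⟩)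

end HTP

namespace HTP
variable {n b s : ℕ}

lemma id_idem : Idem (id : Fin n → Fin n) := fun _ => rfl

lemma roots_id : roots (id : Fin n → Fin n) = univ := by
  ext v; simp [roots]

lemma run_append (r : Fin n → Fin n) (L₁ L₂ : List (Step n)) :
    run r (L₁ ++ L₂) = run (run r L₁) L₂ := List.foldl_append ..

lemma valid_append {L₁ L₂ : List (Step n)} :
    ∀ {r : Fin n → Fin n}, Valid b r (L₁ ++ L₂) ↔ Valid b r L₁ ∧ Valid b (run r L₁) L₂ := by
  induction L₁ with
  | nil => intro r; simp [Valid]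
  | cons p L₁ ih =>
    intro r
    show (ok b r p ∧ Valid b (app r p) (L₁ ++ L₂)) ↔ _
    rw [ih]
    exact ⟨fun ⟨h1, h2, h3⟩ => ⟨⟨h1, h2⟩, h3⟩, fun ⟨⟨h1, h2⟩, h3⟩ => ⟨h1, h2, h3⟩⟩

lemma edges_cons (p : Step n) (M : List (Step n)) :
    edges (p :: M) = insert (edgeOf p) (edges M) := by
  simp [edges]

lemma edges_append (L₁ L₂ : List (Step n)) :
    edges (L₁ ++ L₂) = edges L₁ ∪ edges L₂ := by
  simp [edges]

variable {L : List (Step n)}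

lemma roots_final_card (hb : 2 ≤ b) (hn : n = s*(b-1)+1)
    (hL : L ∈ seqs b s (id : Fin n → Fin n)) : (roots (run id L)).card = 1 := by
  obtain ⟨hlen, hV⟩ := mem_seqs.1 hL
  rw [roots_run id_idem hV, roots_id, card_sdiff_of_subset (subset_univ _), childU_card hb id_idem hV,
    hlen, card_univ, Fintype.card_fin]
  omega

lemma run_const (hb : 2 ≤ b) (hn : n = s*(b-1)+1)
    (hL : L ∈ seqs b s (id : Fin n → Fin n)) : ∀ v w, run id L v = run id L w := by
  intro v w
  obtain ⟨hlen, hV⟩ := mem_seqs.1 hL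
  have hI := run_idem id_idem hV
  have h1 : ∀ x, run id L x ∈ roots (run id L) := fun x => mem_roots.2 (hI x)
  exact card_le_one.1 (le_of_eq (roots_final_card hb hn hL)) _ (h1 v) _ (h1 w)

lemma conn_run_id (hL : L ∈ seqs b s (id : Fin n → Fin n)) :
    ∀ v, conn (edges L) v (run id L v) := by
  obtain ⟨hlen, hV⟩ := mem_seqs.1 hL
  exact conn_run L id hV (fun f hf => hf) (fun v => conn_refl _ _)

lemma phi_connected (hb : 2 ≤ b) (hn : n = s*(b-1)+1)
    (hL : L ∈ seqs b s (id : Fin n → Fin n)) : Connected (edges L) := by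
  intro x y
  have hx := conn_run_id hL x
  have hy := conn_run_id hL y
  rw [run_const hb hn hL x y] at hx
  exact (hx.trans (conn_symm hy) : conn _ x y)

theorem phi_tree (hb : 2 ≤ b) (hn : n = s*(b-1)+1)
    (hL : L ∈ seqs b s (id : Fin n → Fin n)) :
    IsHypertree b (edges L) ∧ (edges L).card = s := by
  obtain ⟨hlen, hV⟩ := mem_seqs.1 hL
  have hcard : (edges L).card = s := by rw [edges_card hb id_idem hV, hlen]
  refine ⟨⟨fun e he => uniform_edges hb L id hV e he, phi_connected hb hn hL, ?_⟩, hcard⟩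
  rw [hcard, Nat.mul_comm]
  omega

/-- Key invariant: the pointed vertex `u` stays connected to its component root
without ever using edges outside `P ∪ edges M`. -/
lemma J_run : ∀ (M : List (Step n)) (r : Fin n → Fin n) (P : Finset (Finset (Fin n)))
    (u : Fin n), Valid b r M →
    (conn P u (r u) ∧ ∀ x, r x ≠ r u → conn P x (r x)) →
    conn (P ∪ edges M) u (run r M u) := by
  intro M
  induction M with
  | nil =>
    intro r P u _ hJ
    exact conn_mono subset_union_left hJ.1
  | cons p M ih =>
    intro r P u hV hJ
    have hok : ok b r p := hV.1
    have happ : ∀ y, app r p y = if r y ∈ p.2 then r p.1 else r y := fun _ => rfl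
    set P' := insert (edgeOf p) P with hP'
    have hsub : P ⊆ P' := subset_insert _ _
    have hme : edgeOf p ∈ P' := mem_insert_self _ _
    rw [run_cons]
    refine conn_mono (show P' ∪ edges M ⊆ P ∪ edges (p :: M) from ?_)
      (ih (app r p) P' u hV.2 ⟨?_, ?_⟩)
    · rw [edges_cons, hP', insert_union, union_insert]
    · rw [happ u]
      by_cases hcase : r u ∈ p.2
      · rw [if_pos hcase]
        have hne : r p.1 ≠ r u := fun heq => hok.2.2 (heq ▸ hcase)
        exact (conn_mono hsub hJ.1).trans ((conn_of_mem hme (mem_insert_of_mem hcase)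
          (mem_insert_self _ _)).trans (conn_mono hsub (hJ.2 p.1 hne)))
      · rw [if_neg hcase]; exact conn_mono hsub hJ.1
    · intro x hx
      rw [happ x] at hx ⊢
      by_cases hcx : r x ∈ p.2
      · rw [if_pos hcx] at hx ⊢
        have hxu : r x ≠ r u := by
          intro heq
          exact hx (by rw [happ u, ← heq, if_pos hcx])
        have hne : r p.1 ≠ r u := by
          intro heq
          apply hx
          rw [happ u]
          by_cases h2 : r u ∈ p.2
          · rw [if_pos h2]
          · rw [if_neg h2, heq]
        exact (conn_mono hsub (hJ.2 x hxu)).trans ((conn_of_mem hme (mem_insert_of_mem hcx)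
          (mem_insert_self _ _)).trans (conn_mono hsub (hJ.2 p.1 hne)))
      · rw [if_neg hcx] at hx ⊢
        have hxu : r x ≠ r u := by
          intro heq; exact hx (by rw [happ u, ← heq, if_neg hcx])
        exact conn_mono hsub (hJ.2 x hxu)

end HTP

namespace HTP
open HTP2
variable {n b s : ℕ}

lemma valid_mem_spec : ∀ (L : List (Step n)) (r : Fin n → Fin n), Valid b r L →
    ∀ q ∈ L, q.1 ∉ q.2 ∧ q.2.card = b - 1 := by
  intro L
  induction L with
  | nil => intro r _ q hq; simp at hq
  | cons p L ih =>
    intro r hV q hq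
    rcases List.mem_cons.1 hq with rfl | hq
    · exact ⟨step_fst_not_mem hV.1, hV.1.1⟩
    · exact ih (app r p) hV.2 q hq

theorem par_run (hb : 2 ≤ b) (hn : n = s*(b-1)+1) {L : List (Step n)}
    (hL : L ∈ seqs b s (id : Fin n → Fin n)) {q : Step n} (hq : q ∈ L) {ρ : Fin n}
    (hrho : ∀ v, run id L v = ρ) :
    conn ((edges L).erase (edgeOf q)) q.1 ρ := by
  obtain ⟨hlen, hV⟩ := mem_seqs.1 hL
  have hnd : (L.map edgeOf).Nodup := edges_nodup hb L id id_idem hV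
  obtain ⟨L₁, L₂, rfl⟩ := List.append_of_mem hq
  set L := L₁ ++ q :: L₂
  obtain ⟨hV1, hV2⟩ := valid_append.1 hV
  set r1 := run id L₁ with hr1
  have hVq : ok b r1 q := hV2.1
  have hV2' : Valid b (app r1 q) L₂ := hV2.2
  have hconn1 : ∀ v, conn (edges L₁) v (r1 v) :=
    conn_run L₁ id hV1 (fun f hf => hf) (fun v => conn_refl _ _)
  have happq : app r1 q q.1 = r1 q.1 := edge_rconst hVq q.1 (mem_insert_self _ _)
  have hJ1 : conn (edges L₁) q.1 (app r1 q q.1) := by rw [happq]; exact hconn1 q.1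
  have hJ2 : ∀ x, app r1 q x ≠ app r1 q q.1 → conn (edges L₁) x (app r1 q x) := by
    intro x hx
    have happ : app r1 q x = if r1 x ∈ q.2 then r1 q.1 else r1 x := rfl
    by_cases hcx : r1 x ∈ q.2
    · exact absurd (by rw [happ, if_pos hcx, happq]) hx
    · rw [happ, if_neg hcx]; exact hconn1 x
  have hJ := J_run L₂ (app r1 q) (edges L₁) q.1 hV2' ⟨hJ1, hJ2⟩
  have hrun : run (app r1 q) L₂ q.1 = ρ := by
    have : run id (L₁ ++ q :: L₂) q.1 = ρ := hrho q.1
    rwa [run_append, run_cons] at this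
  rw [hrun] at hJ
  refine conn_mono ?_ hJ
  -- edges L₁ ∪ edges L₂ ⊆ (edges L).erase (edgeOf q)
  rw [List.map_append, List.map_cons, List.nodup_append] at hnd
  obtain ⟨hnd1, hnd2, hdisj⟩ := hnd
  intro f hf
  rw [mem_erase]
  constructor
  · rcases mem_union.1 hf with hf | hf
    · rintro rfl
      exact hdisj _ (by rw [edges] at hf; exact List.mem_toFinset.1 hf) _ List.mem_cons_self rfl
    · rintro rfl
      exact (List.nodup_cons.1 hnd2).1 (by rw [edges] at hf; exact List.mem_toFinset.1 hf)
  · rw [show edges (L₁ ++ q :: L₂) = edges L₁ ∪ insert (edgeOf q) (edges L₂) by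
      rw [edges_append, edges_cons]]
    rcases mem_union.1 hf with hf | hf
    · exact mem_union_left _ hf
    · exact mem_union_right _ (mem_insert_of_mem hf)

/-- Each step of a valid sequence is the canonical (parent, children) pair of its edge. -/
theorem step_canonical (hb : 2 ≤ b) (hn : n = s*(b-1)+1) {L : List (Step n)}
    (hL : L ∈ seqs b s (id : Fin n → Fin n)) {q : Step n} (hq : q ∈ L) {ρ : Fin n}
    (hrho : ∀ v, run id L v = ρ) :
    q = (par (edges L) ρ (edgeOf q), chl (edges L) ρ (edgeOf q)) := by
  obtain ⟨hlen, hV⟩ := mem_seqs.1 hL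
  have hEtree : IsHypertree b (edges L) := (phi_tree hb hn hL).1
  have hqe : edgeOf q ∈ edges L := mem_edges.2 ⟨q, hq, rfl⟩
  have h1 : q.1 = par (edges L) ρ (edgeOf q) :=
    par_eq hb hEtree hqe (mem_insert_self _ _) (par_run hb hn hL hq hrho)
  have h2 : q.2 = chl (edges L) ρ (edgeOf q) := by
    rw [chl, ← h1, edgeOf, erase_insert (valid_mem_spec L id hV q hq).1]
  exact Prod.ext h1 h2

end HTP

namespace HTP
open HTP2
variable {n b s : ℕ} {E : Finset (Finset (Fin n))} {ρ : Fin n}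

noncomputable def stepOf (E : Finset (Finset (Fin n))) (ρ : Fin n) (e : Finset (Fin n)) :
    Step n := (par E ρ e, chl E ρ e)

lemma psi_valid (hb : 2 ≤ b) (hE : IsHypertree b E) :
    ∀ (l : List (Finset (Fin n))) (P : Finset (Finset (Fin n))) (r : Fin n → Fin n),
    (∀ e ∈ l, e ∈ E) → l.Nodup → (∀ e ∈ l, e ∉ P) → P ⊆ E →
    (∀ v, conn P v (r v)) → roots r = univ \ P.biUnion (chl E ρ) → Idem r →
    Valid b r (l.map (stepOf E ρ)) := by
  intro l
  induction l with
  | nil => intro P r _ _ _ _ _ _ _; trivial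
  | cons e l ih =>
    intro P r hmem hnd hdisjP hPE hconn hroots hI
    have heE : e ∈ E := hmem e List.mem_cons_self
    have hok : ok b r (stepOf E ρ e) := by
      refine ⟨chl_card hb hE heE ρ, ?_, ?_⟩
      · intro v hv0
        have hv : v ∈ chl E ρ e := hv0
        have : v ∈ roots r := by
          rw [hroots, mem_sdiff]
          refine ⟨mem_univ _, fun hvP => ?_⟩
          obtain ⟨e', he'P, hve'⟩ := mem_biUnion.1 hvP
          have he'E : e' ∈ E := hPE he'P
          have hne : e ≠ e' := fun h => hdisjP e List.mem_cons_self (h ▸ he'P)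
          rw [mem_chl_iff hb hE heE] at hv
          rw [mem_chl_iff hb hE he'E] at hve'
          exact hne (child_unique hb hE heE he'E hv.1 hve'.1 hv.2 hve'.2)
        exact mem_roots.1 this
      · intro hcon0
        have hcon : r (par E ρ e) ∈ chl E ρ e := hcon0
        have hPe : P ⊆ E.erase e := fun f hf => mem_erase.2
          ⟨fun h => hdisjP e List.mem_cons_self (h ▸ hf), hPE hf⟩
        have h1 : conn (E.erase e) (par E ρ e) (r (par E ρ e)) :=
          conn_mono hPe (hconn _)
        have h2 : conn (E.erase e) (r (par E ρ e)) ρ :=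
          (conn_symm h1).trans (par_spec hb hE heE ρ).2
        rw [mem_chl_iff hb hE heE] at hcon
        exact hcon.2 h2
    refine ⟨hok, ?_⟩
    apply ih (insert e P) (app r (stepOf E ρ e))
    · exact fun f hf => hmem f (List.mem_cons_of_mem _ hf)
    · exact hnd.of_cons
    · intro f hf
      rw [mem_insert]
      rintro (rfl | hfP)
      · exact (List.nodup_cons.1 hnd).1 hf
      · exact hdisjP f (List.mem_cons_of_mem _ hf) hfP
    · exact insert_subset_iff.2 ⟨heE, hPE⟩
    · intro v
      have happ : app r (stepOf E ρ e) v
          = if r v ∈ chl E ρ e then r (par E ρ e) else r v := rfl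
      by_cases hc : r v ∈ chl E ρ e
      · rw [happ, if_pos hc]
        have hPsub : P ⊆ insert e P := subset_insert _ _
        have he' : e ∈ insert e P := mem_insert_self _ _
        refine (conn_mono hPsub (hconn v)).trans ((conn_of_mem he' ?_ ?_).trans
          (conn_mono hPsub (hconn _)))
        · exact mem_of_mem_erase hc
        · exact (par_spec hb hE heE ρ).1
      · rw [happ, if_neg hc]; exact conn_mono (subset_insert _ _) (hconn v)
    · rw [roots_app hI hok, hroots, biUnion_insert]
      have : (stepOf E ρ e).2 = chl E ρ e := rfl
      rw [this]
      ext v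
      simp only [mem_sdiff, mem_union, mem_univ, true_and]
      tauto
    · exact idem_app hok hI

lemma edgeOf_stepOf (hb : 2 ≤ b) (hE : IsHypertree b E) {e : Finset (Fin n)} (heE : e ∈ E) :
    edgeOf (stepOf E ρ e) = e := by
  show insert (par E ρ e) (chl E ρ e) = e
  rw [chl, insert_erase (par_spec hb hE heE ρ).1]

lemma psi_map_edgeOf (hb : 2 ≤ b) (hE : IsHypertree b E) {l : List (Finset (Fin n))}
    (hl : ∀ e ∈ l, e ∈ E) : (l.map (stepOf E ρ)).map edgeOf = l := by
  rw [List.map_map]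
  have : ∀ e ∈ l, (edgeOf ∘ stepOf E ρ) e = id e := fun e he =>
    edgeOf_stepOf hb hE (hl e he)
  rw [List.map_congr_left this, List.map_id]

lemma psi_edges (hb : 2 ≤ b) (hE : IsHypertree b E) {l : List (Finset (Fin n))}
    (hl : ∀ e ∈ l, e ∈ E) : edges (l.map (stepOf E ρ)) = l.toFinset := by
  rw [edges, psi_map_edgeOf hb hE hl]

lemma childU_psi : ∀ l : List (Finset (Fin n)),
    childU (l.map (stepOf E ρ)) = l.toFinset.biUnion (chl E ρ) := by
  intro l
  induction l with
  | nil => simp [childU]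
  | cons e l ih =>
    show chl E ρ e ∪ childU (l.map (stepOf E ρ)) = _
    rw [ih, List.toFinset_cons, biUnion_insert]

lemma psi_run_eq_rho (hb : 2 ≤ b) (hE : IsHypertree b E) {l : List (Finset (Fin n))}
    (hnd : l.Nodup) (hcov : l.toFinset = E) : ∀ v, run id (l.map (stepOf E ρ)) v = ρ := by
  have hl : ∀ e ∈ l, e ∈ E := fun e he => hcov ▸ List.mem_toFinset.2 he
  have hV : Valid b id (l.map (stepOf E ρ)) :=
    psi_valid hb hE l ∅ id hl hnd (by simp) (empty_subset E)
      (fun v => conn_refl _ _) (by simp [roots_id]) id_idem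
  have hroots : roots (run id (l.map (stepOf E ρ))) = {ρ} := by
    rw [roots_run id_idem hV, roots_id, childU_psi, hcov, chl_partition hb hE ρ]
    ext v
    simp only [mem_sdiff, mem_univ, true_and, mem_erase, mem_singleton]
    tauto
  intro v
  have := mem_roots.2 (run_idem id_idem hV v)
  rw [hroots, mem_singleton] at this
  exact this

end HTP

namespace HTP
variable {α : Type*} [DecidableEq α]

noncomputable def listEquiv (E : Finset α) (s : ℕ) (hcard : E.card = s) :
    {l : List α // l.Nodup ∧ l.toFinset = E} ≃ (Fin s ≃ ↥E) := by
  have hlen : ∀ l : {l : List α // l.Nodup ∧ l.toFinset = E}, l.1.length = s := by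
    intro l
    have h1 : l.1.toFinset.card = l.1.length := List.toFinset_card_of_nodup l.2.1
    rw [l.2.2, hcard] at h1
    exact h1.symm
  have hmem : ∀ (l : {l : List α // l.Nodup ∧ l.toFinset = E}) (j : Fin l.1.length),
      l.1.get j ∈ E := by
    intro l j
    have := List.mem_toFinset.2 (l.1.get_mem j)
    rwa [l.2.2] at this
  refine
  { toFun := fun l => Equiv.ofBijective
      (fun i => (⟨l.1.get (Fin.cast (hlen l).symm i), hmem l _⟩ : ↥E)) ⟨?_, ?_⟩
    invFun := fun σ => ⟨List.ofFn (fun i => (σ i : α)), ?_, ?_⟩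
    left_inv := ?_
    right_inv := ?_ }
  · intro i j hij
    have h1 := congrArg Subtype.val hij
    have h2 := List.nodup_iff_injective_get.1 l.2.1 h1
    exact Fin.ext (by simpa using congrArg Fin.val h2)
  · rintro ⟨x, hx⟩
    have hx' : x ∈ l.1.toFinset := by rw [l.2.2]; exact hx
    obtain ⟨j, hget⟩ := List.get_of_mem (List.mem_toFinset.1 hx')
    exact ⟨Fin.cast (hlen l) j, Subtype.ext (by simpa using hget)⟩
  · rw [List.nodup_ofFn]
    intro i j hij
    exact σ.injective (Subtype.ext hij)
  · ext x
    simp only [List.mem_toFinset, List.mem_ofFn]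
    constructor
    · rintro ⟨i, rfl⟩; exact (σ i).2
    · intro hx
      exact ⟨σ.symm ⟨x, hx⟩, by simp⟩
  · intro l
    apply Subtype.ext
    apply List.ext_get (by simp [hlen l])
    intro i h1 h2
    simp [List.get_ofFn]
    rfl
  · intro σ
    apply Equiv.ext
    intro i
    apply Subtype.ext
    simp [List.get_ofFn]

end HTP

namespace HTP
open HTP2

noncomputable def seqTreeEquiv {b s n : ℕ} (hb : 2 ≤ b) (hn : n = s * (b-1) + 1) :
    {L : List (Step n) // L ∈ seqs b s (id : Fin n → Fin n)} ≃
    {w : (Finset (Finset (Fin n)) × Fin n) × List (Finset (Fin n)) //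
      (IsHypertree b w.1.1 ∧ w.1.1.card = s) ∧ w.2.Nodup ∧ w.2.toFinset = w.1.1} := by
  have hpos : 0 < n := by omega
  refine
  { toFun := fun L => ⟨((edges L.1, run id L.1 ⟨0, hpos⟩), L.1.map edgeOf),
      phi_tree hb hn L.2,
      edges_nodup hb L.1 id id_idem (mem_seqs.1 L.2).2, rfl⟩
    invFun := fun w => ⟨w.1.2.map (stepOf w.1.1.1 w.1.1.2), ?_⟩
    left_inv := ?_
    right_inv := ?_ }
  · rcases w with ⟨⟨⟨E, ρ⟩, l⟩, ⟨hT0, hcard0⟩, hnd0, hcov0⟩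
    have hT : IsHypertree b E := hT0
    have hcard : E.card = s := hcard0
    have hnd : l.Nodup := hnd0
    have hcov : l.toFinset = E := hcov0
    apply mem_seqs.2
    constructor
    · show (l.map _).length = s
      rw [List.length_map]
      have h1 : l.toFinset.card = l.length := List.toFinset_card_of_nodup hnd
      rw [hcov] at h1
      omega
    · exact psi_valid hb hT l ∅ id (fun e he => by
        have := List.mem_toFinset.2 he; rwa [hcov] at this) hnd
        (by simp) (empty_subset _) (fun v => conn_refl _ _) (by simp [roots_id]) id_idem
  · rintro ⟨L, hL⟩
    apply Subtype.ext
    dsimp only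
    rw [List.map_map]
    have hrho : ∀ v, run id L v = run id L ⟨0, hpos⟩ := fun v => run_const hb hn hL v _
    have hcanon : ∀ q ∈ L, (stepOf (edges L) (run id L ⟨0, hpos⟩) ∘ edgeOf) q = q := by
      intro q hq
      exact (step_canonical hb hn hL hq hrho).symm
    rw [List.map_congr_left hcanon]
    simp
  · rintro ⟨⟨⟨E, ρ⟩, l⟩, ⟨hT0, hcard0⟩, hnd0, hcov0⟩
    have hT : IsHypertree b E := hT0
    have hnd : l.Nodup := hnd0
    have hcov : l.toFinset = E := hcov0
    apply Subtype.ext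
    dsimp only
    have hl : ∀ e ∈ l, e ∈ E := fun e he => by
      have := List.mem_toFinset.2 he; rwa [hcov] at this
    have h1 : edges (l.map (stepOf E ρ)) = E := by rw [psi_edges hb hT hl, hcov]
    have h2 : run id (l.map (stepOf E ρ)) ⟨0, hpos⟩ = ρ := psi_run_eq_rho hb hT hnd hcov _
    have h3 : (l.map (stepOf E ρ)).map edgeOf = l := psi_map_edgeOf hb hT hl
    rw [h1, h2, h3]

end HTP

namespace HTP
open HTP2

theorem card_eq_main {b s n : ℕ} (hb : 2 ≤ b) (hn : n = s * (b-1) + 1) :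
    Nat.card {p : Finset (Finset (Fin n)) × Fin n //
        IsHypertree b p.1 ∧ p.1.card = s} * s.factorial
      = (seqs b s (id : Fin n → Fin n)).card := by
  classical
  set T := {p : Finset (Finset (Fin n)) × Fin n // IsHypertree b p.1 ∧ p.1.card = s} with hT
  have e2 : {w : (Finset (Finset (Fin n)) × Fin n) × List (Finset (Fin n)) //
      (IsHypertree b w.1.1 ∧ w.1.1.card = s) ∧ w.2.Nodup ∧ w.2.toFinset = w.1.1} ≃
      Σ t : T, {l : List (Finset (Fin n)) // l.Nodup ∧ l.toFinset = t.1.1} :=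
    { toFun := fun w => ⟨⟨w.1.1, w.2.1⟩, ⟨w.1.2, w.2.2⟩⟩
      invFun := fun x => ⟨(x.1.1, x.2.1), x.1.2, x.2.2⟩
      left_inv := fun w => rfl
      right_inv := fun x => rfl }
  have e3 : ∀ t : T, {l : List (Finset (Fin n)) // l.Nodup ∧ l.toFinset = t.1.1} ≃
      Equiv.Perm (Fin s) := by
    intro t
    refine (listEquiv t.1.1 s t.2.2).trans ?_
    have et : ↥t.1.1 ≃ Fin s := Fintype.equivFinOfCardEq (by rw [Fintype.card_coe, t.2.2])
    exact Equiv.equivCongr (Equiv.refl _) et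
  have e4 : {L : List (Step n) // L ∈ seqs b s (id : Fin n → Fin n)} ≃
      T × Equiv.Perm (Fin s) :=
    (seqTreeEquiv hb hn).trans (e2.trans ((Equiv.sigmaCongrRight e3).trans
      (Equiv.sigmaEquivProd _ _)))
  have h5 : Nat.card {L : List (Step n) // L ∈ seqs b s (id : Fin n → Fin n)}
      = (seqs b s (id : Fin n → Fin n)).card := by
    rw [Nat.card_eq_fintype_card]
    exact Fintype.card_coe _
  rw [← h5, Nat.card_congr e4, Nat.card_prod]
  congr 1
  rw [Nat.card_eq_fintype_card, Fintype.card_perm, Fintype.card_fin]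

theorem seqs_card_eval {b s n : ℕ} (hb : 2 ≤ b) (hn : n = s * (b-1) + 1) :
    (seqs b s (id : Fin n → Fin n)).card * ((b-1).factorial)^s
      = n^s * (s*(b-1)).factorial := by
  rw [card_seqs s id id_idem]
  have hroots : (roots (id : Fin n → Fin n)).card = n := by
    rw [roots_id, card_univ, Fintype.card_fin]
  have hterm : ∀ i ∈ range s,
      n * (((roots (id : Fin n → Fin n)).card - 1 - i*(b-1)).choose (b-1))
        = n * (((s-i)*(b-1)).choose (b-1)) := by
    intro i hi
    rw [mem_range] at hi
    congr 2
    rw [hroots, Nat.sub_mul]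
    omega
  rw [Finset.prod_congr rfl hterm, Finset.prod_mul_distrib, Finset.prod_const, card_range]
  have hrefl : ∏ i ∈ range s, (((s-i)*(b-1)).choose (b-1))
      = ∏ j ∈ range s, (((j+1)*(b-1)).choose (b-1)) := by
    rw [← Finset.prod_range_reflect]
    apply Finset.prod_congr rfl
    intro j hj
    rw [mem_range] at hj
    congr 2
    omega
  rw [hrefl]
  have htel : ∀ m : ℕ, (∏ j ∈ range m, (((j+1)*(b-1)).choose (b-1)))
      * ((b-1).factorial)^m = (m*(b-1)).factorial := by
    intro m
    induction m with
    | zero => simp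
    | succ m ih =>
      rw [Finset.prod_range_succ, pow_succ]
      have hle : (b-1) ≤ (m+1)*(b-1) := by
        calc b - 1 = 1 * (b-1) := (one_mul _).symm
        _ ≤ (m+1)*(b-1) := Nat.mul_le_mul_right _ (by omega)
      have hkey := Nat.choose_mul_factorial_mul_factorial hle
      have hsub : (m+1)*(b-1) - (b-1) = m*(b-1) := by
        rw [Nat.succ_mul]
        omega
      rw [hsub] at hkey
      calc (∏ j ∈ range m, (((j+1)*(b-1)).choose (b-1))) * (((m+1)*(b-1)).choose (b-1))
          * (((b-1).factorial)^m * (b-1).factorial)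
          = ((∏ j ∈ range m, (((j+1)*(b-1)).choose (b-1))) * ((b-1).factorial)^m)
            * ((((m+1)*(b-1)).choose (b-1)) * (b-1).factorial) := by ring
        _ = (m*(b-1)).factorial * ((((m+1)*(b-1)).choose (b-1)) * (b-1).factorial) := by
            rw [ih]
        _ = (((m+1)*(b-1)).choose (b-1)) * (b-1).factorial * (m*(b-1)).factorial := by ring
        _ = ((m+1)*(b-1)).factorial := hkey
  rw [mul_assoc, htel s]

end HTP


/-- The number of rooted `b`-uniform hypertrees with `s` hyperedges on
`n = s(b-1)+1` labeled vertices equals `((n-1)!/((b-1)!^s · s!))·n^s`. -/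
theorem rooted_hypertrees_count (b s n : ℕ) (hb : 2 ≤ b) (hn : n = s * (b - 1) + 1) :
    (Nat.card {p : Finset (Finset (Fin n)) × Fin n //
        IsHypertree b p.1 ∧ p.1.card = s} : ℚ)
      = (Nat.factorial (n - 1) : ℚ) * (n : ℚ) ^ s /
        ((Nat.factorial (b - 1) : ℚ) ^ s * (Nat.factorial s : ℚ)) := by
  have h1 := HTP.card_eq_main hb hn
  have h2 := HTP.seqs_card_eval hb hn
  have h3 : Nat.card {p : Finset (Finset (Fin n)) × Fin n //
        IsHypertree b p.1 ∧ p.1.card = s} * (s.factorial * ((b-1).factorial)^s)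
      = n^s * ((n-1).factorial) := by
    have hn1 : n - 1 = s * (b-1) := by omega
    rw [hn1, ← mul_assoc, h1, h2]
  have hQ : (Nat.card {p : Finset (Finset (Fin n)) × Fin n //
        IsHypertree b p.1 ∧ p.1.card = s} : ℚ)
      * ((Nat.factorial s : ℚ) * (Nat.factorial (b-1) : ℚ)^s)
      = (n : ℚ)^s * (Nat.factorial (n-1) : ℚ) := by
    exact_mod_cast congrArg (Nat.cast : ℕ → ℚ) h3
  have hne : ((Nat.factorial (b-1) : ℚ)^s * (Nat.factorial s : ℚ)) ≠ 0 :=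
    mul_ne_zero (pow_ne_zero _ (Nat.cast_ne_zero.2 (Nat.factorial_ne_zero _)))
      (Nat.cast_ne_zero.2 (Nat.factorial_ne_zero _))
  rw [eq_div_iff hne]
  linear_combination hQ
end

section
/- The exponential generating function T(z) = Σ_{s≥0} ((n-1)!/(((b-1)!)^s s!)) n^s · z^n/n! with n = s(b-1)+1 satisfies the functional equation T(z) = z·exp(T(z)^{b-1}/(b-1)!). -/
open PowerSeries

/-- Formal composition `f ∘ u` of power series, valid when `u` has zero
constant term (then `coeff m (u^k) = 0` for `k > m`). -/
noncomputable def pscomp (f u : PowerSeries ℚ) : PowerSeries ℚ :=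
  PowerSeries.mk fun m => ∑ k ∈ Finset.range (m + 1),
    PowerSeries.coeff k f * PowerSeries.coeff m (u ^ k)

/-- The exponential generating function of rooted `b`-uniform hypertrees:
its `n`-th coefficient is `a_n/n!` where `a_n = (n-1)!·n^s/((b-1)!^s·s!)` when
`n = s(b-1)+1` and `a_n = 0` otherwise. -/
noncomputable def hypertreeEGF (b : ℕ) : PowerSeries ℚ :=
  PowerSeries.mk fun m =>
    if 1 ≤ m ∧ (b - 1) ∣ (m - 1) then
      (Nat.factorial (m - 1) * m ^ ((m - 1) / (b - 1)) : ℚ) /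
        ((Nat.factorial (b - 1) : ℚ) ^ ((m - 1) / (b - 1)) *
          (Nat.factorial ((m - 1) / (b - 1)) : ℚ) * (Nat.factorial m : ℚ))
    else 0


section AuxHypertree
open Polynomial

noncomputable def abelP (q : ℚ) : ℕ → ℚ[X]
  | 0 => 1
  | n+1 => Polynomial.X * (Polynomial.X + Polynomial.C ((n+1 : ℕ) * q)) ^ n

lemma abelP_C_mul (q : ℚ) (m : ℕ) : Polynomial.C ((m:ℚ) * q) = (m : ℚ[X]) * Polynomial.C q := by
  rw [C_mul, map_natCast]

lemma abelP_deriv (q : ℚ) (n : ℕ) :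
    derivative (abelP q (n+1)) = ((n+1 : ℕ) : ℚ) • (abelP q n).comp (Polynomial.X + Polynomial.C q) := by
  cases n with
  | zero => simp [abelP]
  | succ n =>
      simp only [abelP]
      rw [mul_comp, X_comp, pow_comp, add_comp, X_comp, C_comp, derivative_mul,
        Polynomial.derivative_pow, Polynomial.derivative_X, derivative_add, Polynomial.derivative_X, Polynomial.derivative_C,
        Polynomial.smul_eq_C_mul, abelP_C_mul, abelP_C_mul]
      push_cast
      simp only [map_add, map_ofNat, map_natCast, map_one]
      ring

lemma poly_ext (p r : ℚ[X]) (hd : derivative p = derivative r) (h0 : p.eval 0 = r.eval 0) :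
    p = r := by
  have h := eq_C_of_derivative_eq_zero (p := p - r) (by rw [derivative_sub, hd, sub_self])
  have h2 : (p - r).eval 0 = 0 := by rw [eval_sub, h0, sub_self]
  rw [← Polynomial.coeff_zero_eq_eval_zero] at h2
  rw [h2, map_zero] at h
  exact sub_eq_zero.mp h


lemma abelP_eval_zero (q : ℚ) (k : ℕ) : (abelP q k).eval 0 = if k = 0 then 1 else 0 := by
  cases k with
  | zero => simp [abelP]
  | succ k => simp [abelP]

lemma abelP_binomial (q : ℚ) (n : ℕ) : ∀ y : ℚ,
    (abelP q n).comp (Polynomial.X + Polynomial.C y) =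
      ∑ k ∈ Finset.range (n+1), ((n.choose k : ℚ) * (abelP q (n-k)).eval y) • abelP q k := by
  induction n with
  | zero => intro y; simp [abelP]
  | succ n ih =>
      intro y
      apply poly_ext
      · -- derivatives agree
        rw [derivative_comp, derivative_add, Polynomial.derivative_X, Polynomial.derivative_C, add_zero,
          one_mul, abelP_deriv]
        rw [smul_comp, comp_assoc]
        have hc : (Polynomial.X + Polynomial.C q).comp (Polynomial.X + Polynomial.C y) = Polynomial.X + Polynomial.C (y + q) := by
          rw [add_comp, X_comp, C_comp, map_add]; ring
        rw [hc]
        have hIH : (abelP q n).comp (Polynomial.X + Polynomial.C (y + q))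
            = ((abelP q n).comp (Polynomial.X + Polynomial.C y)).comp (Polynomial.X + Polynomial.C q) := by
          rw [comp_assoc, add_comp, X_comp, C_comp, map_add]; ring_nf
        rw [hIH, ih y, Polynomial.sum_comp, derivative_sum, Finset.smul_sum]
        conv_rhs => rw [Finset.sum_range_succ']
        simp only [derivative_smul, smul_comp]
        have h0 : derivative (abelP q 0) = 0 := by simp [abelP]
        rw [h0, smul_zero, add_zero]
        refine Finset.sum_congr rfl fun i hi => ?_
        rw [abelP_deriv, Nat.succ_sub_succ, smul_smul, smul_smul]
        congr 1
        have h := Nat.add_one_mul_choose_eq n i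
        have h' : ((n+1) * n.choose i : ℚ) = ((n+1).choose (i+1) * (i+1) : ℕ) := by
          exact_mod_cast congrArg (Nat.cast : ℕ → ℚ) h
        push_cast at h' ⊢
        linear_combination eval y (abelP q (n - i)) * h' 
      · -- values at 0 agree
        rw [eval_comp]
        simp only [eval_finset_sum, eval_smul, abelP_eval_zero, eval_add, eval_X, eval_C,
          zero_add, smul_eq_mul]
        rw [Finset.sum_eq_single 0]
        · simp
        · intro k hk hk0
          simp [hk0]
        · intro h
          simp at h

lemma abelP_eval (q x : ℚ) (a : ℕ) (hx : x + a * q ≠ 0) :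
    (abelP q a).eval x = x * (x + a * q) ^ a / (x + a * q) := by
  cases a with
  | zero =>
      simp only [Nat.cast_zero, zero_mul, add_zero] at hx ⊢
      show (1 : ℚ[X]).eval x = _
      rw [eval_one, pow_zero]
      field_simp
  | succ a =>
      show (Polynomial.X * (Polynomial.X + Polynomial.C ((a+1:ℕ) * q)) ^ a).eval x = _
      rw [eval_mul, eval_X, eval_pow, eval_add, eval_X, eval_C, pow_succ]
      rw [mul_div_assoc, mul_div_assoc, div_self hx, mul_one]

/-- coefficient formula for powers of the hypertree EGF -/
noncomputable def G (q j n : ℕ) : ℚ :=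
  if j ≤ n ∧ q ∣ (n - j) then
    (j : ℚ) * (n : ℚ) ^ ((n - j) / q) /
      ((n : ℚ) * (q.factorial : ℚ) ^ ((n - j) / q) * ((((n - j) / q).factorial : ℕ) : ℚ))
  else 0

lemma G_of_neg {q j n : ℕ} (h : ¬(j ≤ n ∧ q ∣ (n - j))) : G q j n = 0 := by
  unfold G; rw [if_neg h]

lemma G_of_pos {q j n : ℕ} (h : j ≤ n ∧ q ∣ (n - j)) : G q j n =
    (j : ℚ) * (n : ℚ) ^ ((n - j) / q) /
      ((n : ℚ) * (q.factorial : ℚ) ^ ((n - j) / q) * ((((n - j) / q).factorial : ℕ) : ℚ)) := by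
  unfold G; rw [if_pos h]

lemma G_ne_zero {q j n : ℕ} (h : G q j n ≠ 0) : j ≤ n ∧ q ∣ (n - j) := by
  by_contra hc; exact h (G_of_neg hc)

lemma abelP_sum_eval (q y : ℚ) (s : ℕ) :
    (abelP q s).eval (1 + y) =
      ∑ k ∈ Finset.range (s+1), (s.choose k : ℚ) * (abelP q (s-k)).eval y * (abelP q k).eval 1 := by
  have h := congrArg (Polynomial.eval 1) (abelP_binomial q s y)
  rw [eval_comp, eval_add, eval_X, eval_C] at h
  simpa [eval_finset_sum, smul_eq_mul, mul_assoc] using h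

lemma G_formula (q j s : ℕ) (hq : 0 < q) :
    G q j (q*s + j) = (j:ℚ) * ((q*s + j : ℕ):ℚ)^s /
      (((q*s + j : ℕ):ℚ) * (q.factorial:ℚ)^s * (s.factorial:ℚ)) := by
  have h1 : j ≤ q*s + j := Nat.le_add_left j (q*s)
  have h2 : q*s + j - j = q*s := Nat.add_sub_cancel (q*s) j
  have h3 : q ∣ (q*s + j - j) := by rw [h2]; exact Dvd.intro s rfl
  rw [G_of_pos ⟨h1, h3⟩, h2, Nat.mul_div_cancel_left s hq]

lemma G_term (q j s a : ℕ) (hq0 : 0 < q) (hj : 1 ≤ j) (ha' : a ≤ s) :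
    G q 1 (q*a+1) * G q j (q*(s-a) + j) =
      ((s.choose a : ℚ) * (abelP (q:ℚ) (s-a)).eval (j:ℚ) * (abelP (q:ℚ) a).eval 1) /
        ((q.factorial:ℚ)^s * (s.factorial:ℚ)) := by
  rw [G_formula q 1 a hq0, G_formula q j (s-a) hq0]
  have hx1 : (1:ℚ) + (a:ℚ) * q ≠ 0 := by positivity
  have hj1 : (1:ℚ) ≤ (j:ℚ) := by exact_mod_cast hj
  have hx2 : (j:ℚ) + ((s-a : ℕ):ℚ) * q ≠ 0 := by positivity
  rw [abelP_eval (q:ℚ) 1 a hx1, abelP_eval (q:ℚ) (j:ℚ) (s-a) hx2]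
  have hc1 : ((q*a+1 : ℕ):ℚ) = 1 + (a:ℚ)*q := by push_cast; ring
  have hc2 : ((q*(s-a)+j : ℕ):ℚ) = (j:ℚ) + ((s-a:ℕ):ℚ)*q := by push_cast; ring
  rw [hc1, hc2]
  have hfs : (q.factorial:ℚ)^s = (q.factorial:ℚ)^a * (q.factorial:ℚ)^(s-a) := by
    rw [← pow_add, Nat.add_sub_cancel' ha']
  have hchoose : (s.factorial : ℚ) = (s.choose a : ℚ) * (a.factorial:ℚ) * ((s-a).factorial:ℚ) := by
    exact_mod_cast congrArg (Nat.cast : ℕ → ℚ) (Nat.choose_mul_factorial_mul_factorial ha').symm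
  rw [hfs, hchoose]
  have Fne : (q.factorial : ℚ) ≠ 0 := Nat.cast_ne_zero.mpr (Nat.factorial_ne_zero q)
  have hA : (a.factorial : ℚ) ≠ 0 := Nat.cast_ne_zero.mpr (Nat.factorial_ne_zero a)
  have hB : ((s-a).factorial : ℚ) ≠ 0 := Nat.cast_ne_zero.mpr (Nat.factorial_ne_zero (s-a))
  have hC : (s.choose a : ℚ) ≠ 0 := Nat.cast_ne_zero.mpr (Nat.choose_pos ha').ne' 
  generalize (1 + (a:ℚ)*q) = M at *
  generalize ((j:ℚ) + ((s-a:ℕ):ℚ)*q) = L at *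
  generalize ((q.factorial : ℚ)) = F at *
  generalize ((a.factorial : ℚ)) = A at *
  generalize (((s-a).factorial : ℚ)) = B at *
  field_simp
  ring


lemma G_conv (q j n : ℕ) (hq : 1 ≤ q) (hj : 1 ≤ j) :
    ∑ i ∈ Finset.range (n+1), G q 1 i * G q j (n - i) = G q (j+1) n := by
  have hq0 : 0 < q := hq
  by_cases hcond : j+1 ≤ n ∧ q ∣ (n - (j+1))
  · obtain ⟨hjn, hdvd⟩ := hcond
    set s := (n - (j+1)) / q with hs
    have hqs : q * s = n - (j+1) := Nat.mul_div_cancel' hdvd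
    have hn : n = q * s + (j + 1) := by omega
    have hre : ∑ i ∈ Finset.range (n+1), G q 1 i * G q j (n - i)
        = ∑ a ∈ Finset.range (s+1), G q 1 (a*q+1) * G q j (n - (a*q+1)) := by
      apply Finset.sum_bij_ne_zero (i := fun m _ _ => (m-1)/q)
      · intro m hm hne
        have h1 := G_ne_zero (left_ne_zero_of_mul hne)
        have h2 := G_ne_zero (right_ne_zero_of_mul hne)
        obtain ⟨α, hα⟩ := h1.2
        obtain ⟨β, hβ⟩ := h2.2
        rw [Finset.mem_range] at hm ⊢
        have hm1 : 1 ≤ m := h1.1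
        have hsum : (m - 1) + ((n - m) - j) = n - (j+1) := by omega
        have hαβ : q * (α + β) = q * s := by
          rw [Nat.mul_add, ← hα, ← hβ, hsum, hqs]
        have hαs : α ≤ s := by
          have := Nat.eq_of_mul_eq_mul_left hq0 hαβ
          omega
        rw [hα, Nat.mul_div_cancel_left α hq0]
        omega
      · intro m1 hm1 hn1 m2 hm2 hn2 heq
        have h1 := G_ne_zero (left_ne_zero_of_mul hn1)
        have h2 := G_ne_zero (left_ne_zero_of_mul hn2)
        have e1 : (m1 - 1)/q * q = m1 - 1 := Nat.div_mul_cancel h1.2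
        have e2 : (m2 - 1)/q * q = m2 - 1 := Nat.div_mul_cancel h2.2
        rw [heq] at e1
        have := h1.1; have := h2.1
        omega
      · intro b hb hgb
        rw [Finset.mem_range] at hb
        refine ⟨b*q+1, ?_, hgb, ?_⟩
        · rw [Finset.mem_range]
          have h1 : q*b ≤ q*s := Nat.mul_le_mul_left q (by omega)
          have h2 : b*q = q*b := mul_comm b q
          omega
        · rw [Nat.add_sub_cancel]
          exact Nat.mul_div_cancel b hq0
      · intro m hm hne
        have h1 := G_ne_zero (left_ne_zero_of_mul hne)
        have e1 : (m - 1)/q * q = m - 1 := Nat.div_mul_cancel h1.2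
        have hm1 : 1 ≤ m := h1.1
        rw [show (m-1)/q * q + 1 = m by omega]
    rw [hre]
    have hterm : ∀ a ∈ Finset.range (s+1), G q 1 (a*q+1) * G q j (n - (a*q+1)) =
        ((s.choose a : ℚ) * (abelP (q:ℚ) (s-a)).eval (j:ℚ) * (abelP (q:ℚ) a).eval 1) /
          ((q.factorial:ℚ)^s * (s.factorial:ℚ)) := by
      intro a ha
      rw [Finset.mem_range] at ha
      have ha' : a ≤ s := by omega
      have hsub : n - (a*q+1) = q*(s-a) + j := by
        have h1 : q*(s-a) + q*a = q*s := by rw [← Nat.mul_add, Nat.sub_add_cancel ha']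
        apply Nat.sub_eq_of_eq_add
        rw [hn, ← h1, mul_comm a q]; ring
      have e0 : a*q+1 = q*a+1 := by rw [mul_comm]
      rw [hsub, e0]
      exact G_term q j s a hq0 hj ha'
    rw [Finset.sum_congr rfl hterm, ← Finset.sum_div, ← abelP_sum_eval (q:ℚ) (j:ℚ) s]
    have hj1 : (1:ℚ) ≤ (j:ℚ) := by exact_mod_cast hj
    have hx3 : (1:ℚ) + (j:ℚ) + ((s:ℕ):ℚ) * (q:ℚ) ≠ 0 := by positivity
    have hx3' : (1:ℚ) + (j:ℚ) + ((s:ℕ):ℚ) * (q:ℚ) = 1 + (j:ℚ) + (s:ℚ)*(q:ℚ) := rfl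
    rw [abelP_eval (q:ℚ) (1 + (j:ℚ)) s (by rw [add_assoc]; rw [add_assoc] at hx3; exact hx3)]
    have hGn : G q (j+1) n = ((j+1:ℕ):ℚ) * ((q*s+(j+1) : ℕ):ℚ)^s /
        (((q*s+(j+1) : ℕ):ℚ) * (q.factorial:ℚ)^s * (s.factorial:ℚ)) := by
      rw [hn]; exact G_formula q (j+1) s hq0
    have hcast : ((q*s+(j+1) : ℕ):ℚ) = 1 + (j:ℚ) + (s:ℚ)*(q:ℚ) := by push_cast; ring
    rw [hGn, hcast]
    have hS : (s.factorial : ℚ) ≠ 0 := Nat.cast_ne_zero.mpr (Nat.factorial_ne_zero s)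
    have Fne : (q.factorial : ℚ) ≠ 0 := Nat.cast_ne_zero.mpr (Nat.factorial_ne_zero q)
    have hy : (1:ℚ) + (j:ℚ) + (s:ℚ)*(q:ℚ) ≠ 0 := hx3
    push_cast
    generalize ((1:ℚ) + (j:ℚ) + (s:ℚ)*(q:ℚ)) = Y at *
    generalize ((q.factorial : ℚ)) = F at *
    generalize ((s.factorial : ℚ)) = S at *
    field_simp
    ring
  · rw [G_of_neg hcond]
    apply Finset.sum_eq_zero
    intro m hm
    rcases eq_or_ne (G q 1 m) 0 with h|h
    · rw [h, zero_mul]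
    rcases eq_or_ne (G q j (n - m)) 0 with h'|h'
    · rw [h', mul_zero]
    exfalso
    have h1 := G_ne_zero h
    have h2 := G_ne_zero h'
    obtain ⟨α, hα⟩ := h1.2
    obtain ⟨β, hβ⟩ := h2.2
    rw [Finset.mem_range] at hm
    apply hcond
    constructor
    · omega
    · have hsum : n - (j+1) = (m - 1) + ((n - m) - j) := by omega
      rw [hsum, hα, hβ]
      exact dvd_add (Dvd.intro α rfl) (Dvd.intro β rfl)



end AuxHypertree

lemma coeff_T (b n : ℕ) : PowerSeries.coeff n (hypertreeEGF b) = G (b-1) 1 n := by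
  rw [hypertreeEGF, PowerSeries.coeff_mk]
  by_cases h : 1 ≤ n ∧ (b-1) ∣ (n - 1)
  · rw [if_pos h, G_of_pos h]
    have hn0 : (n:ℚ) ≠ 0 := Nat.cast_ne_zero.mpr (by omega)
    have hfact : (n.factorial : ℚ) = n * ((n-1).factorial : ℕ) := by
      exact_mod_cast congrArg (Nat.cast : ℕ → ℚ) (Nat.mul_factorial_pred (by omega : n ≠ 0)).symm
    rw [hfact]
    have h1 : ((n-1).factorial : ℚ) ≠ 0 := Nat.cast_ne_zero.mpr (Nat.factorial_ne_zero _)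
    have h2 : ((b-1).factorial : ℚ) ≠ 0 := Nat.cast_ne_zero.mpr (Nat.factorial_ne_zero _)
    have h3 : (((n-1)/(b-1)).factorial : ℚ) ≠ 0 := Nat.cast_ne_zero.mpr (Nat.factorial_ne_zero _)
    field_simp
    ring
  · rw [if_neg h, G_of_neg h]

lemma coeff_T_pow (b : ℕ) (hb : 2 ≤ b) : ∀ (j : ℕ), 1 ≤ j → ∀ n,
    PowerSeries.coeff n ((hypertreeEGF b)^j) = G (b-1) j n := by
  intro j
  induction j with
  | zero => omega
  | succ j ih =>
      intro _ n
      rcases Nat.eq_zero_or_pos j with hj0 | hj1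
      · subst hj0
        rw [pow_one]
        exact coeff_T b n
      · rw [pow_succ', PowerSeries.coeff_mul,
          Finset.Nat.sum_antidiagonal_eq_sum_range_succ_mk]
        have hstep : ∀ i ∈ Finset.range (n+1),
            PowerSeries.coeff i (hypertreeEGF b) *
              PowerSeries.coeff (n-i) ((hypertreeEGF b)^j)
            = G (b-1) 1 i * G (b-1) j (n-i) := by
          intro i _
          rw [coeff_T, ih hj1]
        rw [Finset.sum_congr rfl hstep]
        exact G_conv (b-1) j n (by omega) hj1

lemma G_term2 (q s i : ℕ) (hq0 : 0 < q) (his : i < s) :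
    (1/((i+1).factorial : ℚ)) * (((q.factorial:ℚ))⁻¹^(i+1) * G q (q*(i+1)) (q*s)) =
      ((s-1).choose i : ℚ) * ((q*s : ℕ):ℚ)^(s-1-i) * (q:ℚ) /
        (((s-1).factorial:ℚ) * ((q*s:ℕ):ℚ) * (q.factorial:ℚ)^s) := by
  have hik : i + 1 ≤ s := his
  have hm : q*(s-(i+1)) + q*(i+1) = q*s := by rw [← Nat.mul_add, Nat.sub_add_cancel hik]
  rw [← hm, G_formula q (q*(i+1)) (s-(i+1)) hq0, hm]
  have hidx : s - (i+1) = s - 1 - i := by omega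
  rw [hidx]
  have hfac1 : ((i+1).factorial : ℚ) = (i+1) * (i.factorial : ℚ) := by
    push_cast [Nat.factorial_succ]; ring
  have hfac2 : ((s-1).factorial : ℚ) = ((s-1).choose i : ℚ) * (i.factorial:ℚ) * ((s-1-i).factorial:ℚ) := by
    exact_mod_cast congrArg (Nat.cast : ℕ → ℚ)
      (Nat.choose_mul_factorial_mul_factorial (by omega : i ≤ s-1)).symm
  have hFs : (q.factorial:ℚ)^s = (q.factorial:ℚ)^(i+1) * (q.factorial:ℚ)^(s-1-i) := by
    rw [← pow_add]; congr 1; omega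
  have hcast : ((q*(i+1) : ℕ):ℚ) = (q:ℚ) * ((i:ℚ)+1) := by push_cast; ring
  rw [hfac1, hfac2, hFs, hcast, inv_pow]
  have Fne : ((q.factorial:ℚ))^(i+1) ≠ 0 := pow_ne_zero _ (Nat.cast_ne_zero.mpr (Nat.factorial_ne_zero q))
  have Fne2 : ((q.factorial:ℚ))^(s-1-i) ≠ 0 := pow_ne_zero _ (Nat.cast_ne_zero.mpr (Nat.factorial_ne_zero q))
  have hA : (i.factorial : ℚ) ≠ 0 := Nat.cast_ne_zero.mpr (Nat.factorial_ne_zero i)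
  have hB : ((s-1-i).factorial : ℚ) ≠ 0 := Nat.cast_ne_zero.mpr (Nat.factorial_ne_zero _)
  have hC : ((s-1).choose i : ℚ) ≠ 0 := Nat.cast_ne_zero.mpr (Nat.choose_pos (by omega : i ≤ s-1)).ne'
  have hM : ((q*s : ℕ):ℚ) ≠ 0 := Nat.cast_ne_zero.mpr (Nat.mul_ne_zero (by omega) (by omega))
  have hi1 : ((i:ℚ)+1) ≠ 0 := by positivity
  generalize ((q*s : ℕ):ℚ) = M at *
  generalize ((q.factorial : ℚ)) = F at *
  field_simp

lemma final_id (q m : ℕ) (hq : 1 ≤ q) :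
    ∑ k ∈ Finset.range (m+1), (1/(k.factorial : ℚ)) * (((q.factorial:ℚ))⁻¹^k *
      (if k = 0 then (if m = 0 then (1:ℚ) else 0) else G q (q*k) m)) = G q 1 (m+1) := by
  have hq0 : 0 < q := hq
  by_cases hm : m = 0
  · subst hm
    rw [Finset.sum_range_one]
    have h1 := G_formula q 1 0 hq0
    simp only [Nat.mul_zero, Nat.zero_add] at h1
    rw [h1]
    norm_num
  · by_cases hdvd : q ∣ m
    · obtain ⟨s, hs⟩ := hdvd
      have hs1 : 1 ≤ s := by
        rcases Nat.eq_zero_or_pos s with h|h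
        · subst h; simp at hs; omega
        · exact h
      have hsm : s + 1 ≤ m + 1 := by
        have h2 : s ≤ q*s := Nat.le_mul_of_pos_left s hq0
        omega
      rw [← Finset.sum_subset (Finset.range_subset_range.mpr hsm) (by
        intro k hk hk2
        rw [Finset.mem_range] at hk hk2
        have hk1 : s + 1 ≤ k := by omega
        have hk0 : k ≠ 0 := by omega
        rw [if_neg hk0, G_of_neg ?_, mul_zero, mul_zero]
        rintro ⟨hle, -⟩
        have h3 : q*(s+1) ≤ q*k := Nat.mul_le_mul_left q hk1
        have h4 : q*s + q = q*(s+1) := by ring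
        have h5 : q*k ≤ q*s := hs ▸ hle
        have := Nat.le_of_mul_le_mul_left (h3.trans h5) hq0
        omega)]
      subst hs
      rw [Finset.sum_range_succ']
      rw [if_pos rfl, if_neg hm, mul_zero, mul_zero, add_zero]
      have hterm : ∀ i ∈ Finset.range s, (1/((i+1).factorial : ℚ)) * (((q.factorial:ℚ))⁻¹^(i+1) *
            (if i+1 = 0 then (0:ℚ) else G q (q*(i+1)) (q*s)))
          = ((s-1).choose i : ℚ) * ((q*s : ℕ):ℚ)^(s-1-i) * (q:ℚ) /
            (((s-1).factorial:ℚ) * ((q*s:ℕ):ℚ) * (q.factorial:ℚ)^s) := by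
        intro i hi
        rw [Finset.mem_range] at hi
        rw [if_neg (by omega)]
        exact G_term2 q s i hq0 hi
      rw [Finset.sum_congr rfl hterm]
      -- binomial
      have hbin : ∑ i ∈ Finset.range s, ((s-1).choose i : ℚ) * ((q*s : ℕ):ℚ)^(s-1-i)
          = (1 + ((q*s : ℕ):ℚ))^(s-1) := by
        rw [add_pow]
        rw [show s = (s-1)+1 by omega]
        apply Finset.sum_congr rfl
        intro i hi
        rw [show (s-1)+1-1 = s-1 by omega]
        ring
      have e1 : ∀ i ∈ Finset.range s, ((s-1).choose i : ℚ) * ((q*s : ℕ):ℚ)^(s-1-i) * (q:ℚ) /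
            (((s-1).factorial:ℚ) * ((q*s:ℕ):ℚ) * (q.factorial:ℚ)^s)
          = ((s-1).choose i : ℚ) * ((q*s : ℕ):ℚ)^(s-1-i) *
            ((q:ℚ) / (((s-1).factorial:ℚ) * ((q*s:ℕ):ℚ) * (q.factorial:ℚ)^s)) := by
        intro i _; ring
      rw [Finset.sum_congr rfl e1, ← Finset.sum_mul, hbin]
      -- final algebra
      have hGf : G q 1 (q*s+1) = (1:ℚ) * ((q*s+1 : ℕ):ℚ)^s /
          (((q*s+1 : ℕ):ℚ) * (q.factorial:ℚ)^s * (s.factorial:ℚ)) := G_formula q 1 s hq0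
      rw [hGf]
      have hsf : (s.factorial : ℚ) = (s:ℚ) * ((s-1).factorial:ℚ) := by
        exact_mod_cast congrArg (Nat.cast : ℕ → ℚ) (Nat.mul_factorial_pred (by omega : s ≠ 0)).symm
      have hc1 : ((q*s+1 : ℕ):ℚ) = 1 + ((q*s:ℕ):ℚ) := by push_cast; ring
      have hc2 : ((q*s:ℕ):ℚ) = (q:ℚ)*(s:ℚ) := by push_cast; ring
      have hpow : (1 + ((q*s:ℕ):ℚ))^s = (1 + ((q*s:ℕ):ℚ))^(s-1) * (1 + ((q*s:ℕ):ℚ)) := by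
        rw [← pow_succ]; congr 1; omega
      rw [hsf, hc1, hpow, hc2]
      have Fne : ((q.factorial:ℚ))^s ≠ 0 := pow_ne_zero _ (Nat.cast_ne_zero.mpr (Nat.factorial_ne_zero q))
      have hB : ((s-1).factorial : ℚ) ≠ 0 := Nat.cast_ne_zero.mpr (Nat.factorial_ne_zero _)
      have hqs : (q:ℚ)*(s:ℚ) ≠ 0 := by positivity
      have hqs1 : 1 + (q:ℚ)*(s:ℚ) ≠ 0 := by positivity
      have hsne : (s:ℚ) ≠ 0 := Nat.cast_ne_zero.mpr (by omega)
      field_simp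
    · -- m ≥ 1, ¬ q ∣ m : both sides zero
      rw [G_of_neg (by
        rintro ⟨-, hd⟩
        rw [Nat.add_sub_cancel] at hd
        exact hdvd hd)]
      apply Finset.sum_eq_zero
      intro k hk
      rcases Nat.eq_zero_or_pos k with h0|h1
      · subst h0; rw [if_pos rfl, if_neg hm, mul_zero, mul_zero]
      · rw [if_neg (by omega), G_of_neg ?_, mul_zero, mul_zero]
        rintro ⟨hle, c, hc⟩
        have hlink : q*(k+c) = q*k + q*c := Nat.mul_add q k c
        exact hdvd ⟨k + c, by omega⟩


/-- The rooted hypertree EGF satisfies `T(z) = z·exp(T(z)^{b-1}/(b-1)!)`. -/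
theorem hypertreeEGF_functional_equation (b : ℕ) (hb : 2 ≤ b) :
    hypertreeEGF b = PowerSeries.X *
      pscomp (PowerSeries.exp ℚ)
        (PowerSeries.C ((Nat.factorial (b - 1) : ℚ))⁻¹ * (hypertreeEGF b) ^ (b - 1)) := by
  have hq : 1 ≤ b - 1 := by omega
  ext n
  cases n with
  | zero =>
      rw [coeff_T, G_of_neg (by rintro ⟨h, -⟩; omega)]
      simp
  | succ m =>
      rw [PowerSeries.coeff_succ_X_mul, pscomp, PowerSeries.coeff_mk, coeff_T]
      have hu : ∀ k : ℕ, PowerSeries.coeff k (PowerSeries.exp ℚ) *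
          PowerSeries.coeff m ((PowerSeries.C ((Nat.factorial (b-1) : ℚ))⁻¹ *
            (hypertreeEGF b)^(b-1))^k)
          = (1/(k.factorial : ℚ)) * ((((b-1).factorial:ℚ))⁻¹^k *
            (if k = 0 then (if m = 0 then (1:ℚ) else 0) else G (b-1) ((b-1)*k) m)) := by
        intro k
        have hexp : PowerSeries.coeff k (PowerSeries.exp ℚ) = 1/(k.factorial:ℚ) := by
          simp [PowerSeries.coeff_exp]
        rw [hexp]
        congr 1
        rcases Nat.eq_zero_or_pos k with h0|h1
        · subst h0
          simp [PowerSeries.coeff_one]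
        · rw [mul_pow, ← map_pow, ← pow_mul, PowerSeries.coeff_C_mul,
            coeff_T_pow b hb ((b-1)*k) (Nat.mul_pos hq h1) m, if_neg (by omega)]
      rw [Finset.sum_congr rfl (fun k _ => hu k)]
      exact (final_id (b-1) m hq).symm
end

section
/- With T(z) the rooted hypertree series satisfying T(z) = z·exp(T(z)^{b-1}/(b-1)!), for every k ≥ 0 and n = s(b-1)+k+1 one has n!·[z^n] (T(z)^{k+1}/(k+1)!) = C(n, k+1)·(k+1)·((n-k-1)!/(((b-1)!)^s s!))·n^{s-1}. -/
open PowerSeries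

open Finset

lemma coeff_pscomp (f u : PowerSeries ℚ) (m : ℕ) :
    PowerSeries.coeff m (pscomp f u) = ∑ k ∈ Finset.range (m + 1),
      PowerSeries.coeff k f * PowerSeries.coeff m (u ^ k) := by
  simp [pscomp]

lemma coeff_pow_zero_of_lt {u : PowerSeries ℚ} (hu : constantCoeff u = 0)
    {m i : ℕ} (h : m < i) : PowerSeries.coeff m (u ^ i) = 0 := by
  obtain ⟨w, hw⟩ := PowerSeries.X_dvd_iff.mpr hu
  rw [hw, mul_pow, PowerSeries.coeff_X_pow_mul', if_neg (by omega)]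

lemma coeff_mul_pow_zero {u v : PowerSeries ℚ} (hu : constantCoeff u = 0)
    (hv : constantCoeff v = 0) {m i l : ℕ} (h : m < i + l) :
    PowerSeries.coeff m (u ^ i * v ^ l) = 0 := by
  rw [PowerSeries.coeff_mul]
  apply Finset.sum_eq_zero
  intro p hp
  rw [Finset.HasAntidiagonal.mem_antidiagonal] at hp
  rcases lt_or_ge p.1 i with h1 | h1
  · rw [coeff_pow_zero_of_lt hu h1, zero_mul]
  · rw [coeff_pow_zero_of_lt hv (by omega), mul_zero]

lemma pscomp_exp_add {u v : PowerSeries ℚ} (hu : constantCoeff u = 0)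
    (hv : constantCoeff v = 0) :
    pscomp (PowerSeries.exp ℚ) (u + v)
      = pscomp (PowerSeries.exp ℚ) u * pscomp (PowerSeries.exp ℚ) v := by
  ext m
  set f : ℕ → ℕ → ℚ := fun i l =>
    ((i.factorial : ℚ))⁻¹ * ((l.factorial : ℚ))⁻¹ *
      PowerSeries.coeff m (u ^ i * v ^ l) with hf
  have hf0 : ∀ i l, m < i + l → f i l = 0 := by
    intro i l h
    simp [hf, coeff_mul_pow_zero hu hv h]
  -- LHS
  have hL : PowerSeries.coeff m (pscomp (PowerSeries.exp ℚ) (u + v))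
      = ∑ k ∈ range (m + 1), ∑ i ∈ range (k + 1), f i (k - i) := by
    rw [coeff_pscomp]
    apply Finset.sum_congr rfl
    intro k _
    rw [add_pow, map_sum, Finset.mul_sum]
    apply Finset.sum_congr rfl
    intro i hi
    rw [Finset.mem_range] at hi
    have hik : i ≤ k := by omega
    have hfact : (PowerSeries.coeff k) (PowerSeries.exp ℚ) * (k.choose i : ℚ)
        = ((i.factorial : ℚ))⁻¹ * (((k - i).factorial : ℚ))⁻¹ := by
      rw [PowerSeries.coeff_exp]
      have := Nat.choose_mul_factorial_mul_factorial hik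
      field_simp
      push_cast [← this]
      have : (k.choose i : ℚ) ≠ 0 := by exact_mod_cast (Nat.choose_pos hik).ne'
      field_simp
    rw [← map_natCast (PowerSeries.C (R := ℚ)) (k.choose i), PowerSeries.coeff_mul_C,
      show (PowerSeries.coeff k) (PowerSeries.exp ℚ) *
          ((PowerSeries.coeff m) (u ^ i * v ^ (k - i)) * ((k.choose i : ℕ) : ℚ))
        = ((PowerSeries.coeff k) (PowerSeries.exp ℚ) * (k.choose i : ℚ)) *
          (PowerSeries.coeff m) (u ^ i * v ^ (k - i)) from by ring, hfact, hf]
  -- triangle to square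
  have htri : ∑ k ∈ range (m + 1), ∑ i ∈ range (k + 1), f i (k - i)
      = ∑ i ∈ range (m + 1), ∑ l ∈ range (m + 1), f i l := by
    rw [Finset.sum_sigma' (range (m+1)) (fun k => range (k+1)) (fun k i => f i (k - i)),
      ← Finset.sum_product' (f := fun i l => f i l)]
    rw [show ((range (m+1)) ×ˢ (range (m+1))
        = ((range (m+1)) ×ˢ (range (m+1))).filter (fun p => p.1 + p.2 ≤ m) ∪
          ((range (m+1)) ×ˢ (range (m+1))).filter (fun p => ¬ p.1 + p.2 ≤ m))
        from (Finset.filter_union_filter_not_eq _ _).symm]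
    rw [Finset.sum_union (Finset.disjoint_filter_filter_not _ _ _)]
    have hzero : ∑ p ∈ ((range (m+1)) ×ˢ (range (m+1))).filter (fun p => ¬ p.1 + p.2 ≤ m),
        f p.1 p.2 = 0 := by
      apply Finset.sum_eq_zero
      intro p hp
      rw [Finset.mem_filter] at hp
      exact hf0 p.1 p.2 (by omega)
    rw [hzero, add_zero]
    apply Finset.sum_nbij' (i := fun x : (_ : ℕ) × ℕ => (x.2, x.1 - x.2))
      (j := fun p : ℕ × ℕ => ⟨p.1 + p.2, p.1⟩)
    · intro a ha
      simp only [Finset.mem_sigma, Finset.mem_range] at ha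
      simp only [Finset.mem_filter, Finset.mem_product, Finset.mem_range]
      omega
    · intro p hp
      simp only [Finset.mem_filter, Finset.mem_product, Finset.mem_range] at hp
      simp only [Finset.mem_sigma, Finset.mem_range]
      omega
    · intro a ha
      simp only [Finset.mem_sigma, Finset.mem_range] at ha
      obtain ⟨kk, ii⟩ := a
      simp only [Finset.mem_range] at ha
      have h : ii + (kk - ii) = kk := by omega
      simp [h]
    · intro p hp
      simp
    · intro a ha
      rfl
  -- RHS
  have hcexp : ∀ k : ℕ, PowerSeries.coeff k (PowerSeries.exp ℚ) = ((k.factorial : ℚ))⁻¹ := by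
    intro k
    simp [PowerSeries.coeff_exp, one_div]
  have hR : PowerSeries.coeff m (pscomp (PowerSeries.exp ℚ) u * pscomp (PowerSeries.exp ℚ) v)
      = ∑ i ∈ range (m + 1), ∑ l ∈ range (m + 1), f i l := by
    rw [PowerSeries.coeff_mul]
    have hstep : ∀ p ∈ Finset.HasAntidiagonal.antidiagonal m,
        PowerSeries.coeff p.1 (pscomp (PowerSeries.exp ℚ) u) *
          PowerSeries.coeff p.2 (pscomp (PowerSeries.exp ℚ) v)
        = ∑ i ∈ range (m + 1), ∑ l ∈ range (m + 1),
            ((i.factorial : ℚ))⁻¹ * ((l.factorial : ℚ))⁻¹ *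
              (PowerSeries.coeff p.1 (u ^ i) * PowerSeries.coeff p.2 (v ^ l)) := by
      intro p hp
      rw [Finset.HasAntidiagonal.mem_antidiagonal] at hp
      rw [coeff_pscomp, coeff_pscomp]
      rw [Finset.sum_subset (Finset.range_subset_range.mpr (by omega : p.1 + 1 ≤ m + 1))
        (by
          intro i _ hi
          rw [Finset.mem_range, not_lt] at hi
          rw [coeff_pow_zero_of_lt hu (by omega), mul_zero])]
      rw [Finset.sum_subset (Finset.range_subset_range.mpr (by omega : p.2 + 1 ≤ m + 1))
        (by
          intro l _ hl
          rw [Finset.mem_range, not_lt] at hl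
          rw [coeff_pow_zero_of_lt hv (by omega), mul_zero])]
      rw [Finset.sum_mul_sum]
      apply Finset.sum_congr rfl
      intro i _
      apply Finset.sum_congr rfl
      intro l _
      rw [hcexp, hcexp]
      ring
    rw [Finset.sum_congr rfl hstep, Finset.sum_comm]
    apply Finset.sum_congr rfl
    intro i _
    rw [Finset.sum_comm]
    apply Finset.sum_congr rfl
    intro l _
    simp only [hf]
    rw [← Finset.mul_sum, PowerSeries.coeff_mul]
  rw [hL, htri, hR]

lemma pscomp_exp_zero : pscomp (PowerSeries.exp ℚ) 0 = 1 := by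
  ext m
  rw [coeff_pscomp]
  rw [Finset.sum_eq_single 0]
  · simp [PowerSeries.coeff_exp]
  · intro k _ hk
    rw [zero_pow hk, map_zero, mul_zero]
  · intro h
    simp at h

lemma pscomp_exp_pow {u : PowerSeries ℚ} (hu : constantCoeff u = 0) (j : ℕ) :
    (pscomp (PowerSeries.exp ℚ) u) ^ j
      = pscomp (PowerSeries.exp ℚ) (PowerSeries.C (j : ℚ) * u) := by
  induction j with
  | zero => simp [pscomp_exp_zero]
  | succ j ih =>
    have hju : constantCoeff (PowerSeries.C (j : ℚ) * u) = 0 := by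
      simp [hu]
    rw [pow_succ, ih, ← pscomp_exp_add hju hu]
    rw [Nat.cast_add, Nat.cast_one, map_add, map_one]
    ring_nf

lemma coeff_exp_rat (k : ℕ) :
    PowerSeries.coeff k (PowerSeries.exp ℚ) = ((k.factorial : ℚ))⁻¹ := by
  simp [PowerSeries.coeff_exp, one_div]

lemma T_sum_formula (b : ℕ) (hb : 2 ≤ b) (T : PowerSeries ℚ)
    (hT : T = PowerSeries.X *
      pscomp (PowerSeries.exp ℚ)
        (PowerSeries.C ((Nat.factorial (b - 1) : ℚ))⁻¹ * T ^ (b - 1)))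
    (hT0 : constantCoeff T = 0) (m j : ℕ) (hjm : j ≤ m) :
    PowerSeries.coeff m (T ^ j)
      = ∑ r ∈ range (m - j + 1),
          ((j : ℚ) * ((Nat.factorial (b - 1) : ℚ))⁻¹) ^ r * ((r.factorial : ℚ))⁻¹ *
            PowerSeries.coeff (m - j) (T ^ ((b - 1) * r)) := by
  set c : ℚ := ((Nat.factorial (b - 1) : ℚ))⁻¹ with hc
  have hu : constantCoeff (PowerSeries.C c * T ^ (b - 1)) = 0 := by
    have : (0 : ℚ) ^ (b - 1) = 0 := zero_pow (by omega)
    simp [hT0, this]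
  conv_lhs => rw [hT]
  rw [mul_pow, pscomp_exp_pow hu j, PowerSeries.coeff_X_pow_mul', if_pos hjm,
    coeff_pscomp]
  apply Finset.sum_congr rfl
  intro r _
  rw [show PowerSeries.C (j : ℚ) * (PowerSeries.C c * T ^ (b - 1))
      = PowerSeries.C ((j : ℚ) * c) * T ^ (b - 1) from by rw [map_mul, mul_assoc],
    mul_pow, ← map_pow, ← pow_mul, PowerSeries.coeff_C_mul, coeff_exp_rat]
  ring

lemma key_binom (x y : ℚ) (n : ℕ) :
    ∑ t ∈ range (n + 1), (n.choose t : ℚ) * x ^ (t + 1) * y ^ (n - t)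
      = x * (x + y) ^ n := by
  rw [add_pow, Finset.mul_sum]
  apply Finset.sum_congr rfl
  intro t _
  rw [pow_succ]
  ring

noncomputable def acoef (q m j : ℕ) : ℚ :=
  if q ∣ (m - j) ∧ j ≤ m then
    (j : ℚ) * (m : ℚ) ^ ((((m - j) / q : ℕ) : ℤ) - 1) *
      ((Nat.factorial q : ℚ))⁻¹ ^ ((m - j) / q) / ((((m - j) / q).factorial : ℚ))
  else 0

lemma coeff_T_pow_s6 (b : ℕ) (hb : 2 ≤ b) (T : PowerSeries ℚ)
    (hT : T = PowerSeries.X *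
      pscomp (PowerSeries.exp ℚ)
        (PowerSeries.C ((Nat.factorial (b - 1) : ℚ))⁻¹ * T ^ (b - 1)))
    (m j : ℕ) (hj : 1 ≤ j) :
    PowerSeries.coeff m (T ^ j) = acoef (b - 1) m j := by
  have hq1 : 1 ≤ b - 1 := by omega
  have hT0 : constantCoeff T = 0 := by
    rw [hT]
    simp
  set q : ℕ := b - 1 with hqdef
  set c : ℚ := ((Nat.factorial q : ℚ))⁻¹ with hc
  have hcne : c ≠ 0 := by
    rw [hc]
    exact inv_ne_zero (by exact_mod_cast Nat.factorial_ne_zero q)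
  induction m using Nat.strong_induction_on generalizing j with
  | _ m IH =>
  by_cases hjm : j ≤ m
  · rw [T_sum_formula b hb T hT hT0 m j hjm]
    by_cases hN0 : m - j = 0
    · -- m = j
      rw [hN0, Finset.sum_range_one]
      have hL1 : ((j : ℚ) * c) ^ 0 * ((Nat.factorial 0 : ℚ))⁻¹ *
          PowerSeries.coeff 0 (T ^ (q * 0)) = 1 := by
        simp
      rw [hL1]
      simp only [acoef, hN0, Nat.zero_div, dvd_zero, true_and, if_pos hjm,
        Nat.factorial_zero, Nat.cast_one, pow_zero, div_one, mul_one]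
      have hmj : (m : ℚ) = (j : ℚ) := by
        have : m = j := by omega
        rw [this]
      rw [hmj]
      have hjne : (j : ℚ) ≠ 0 := by
        exact Nat.cast_ne_zero.mpr (by omega)
      rw [show ((0 : ℕ) : ℤ) - 1 = -1 from rfl, zpow_neg_one]
      field_simp
    · -- m > j
      -- peel the r = 0 term
      rw [Finset.sum_range_succ']
      have h00 : ((j : ℚ) * c) ^ 0 * ((Nat.factorial 0 : ℚ))⁻¹ *
          PowerSeries.coeff (m - j) (T ^ (q * 0)) = 0 := by
        simp [PowerSeries.coeff_one, hN0]
      rw [h00, add_zero]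
      -- rewrite inner coefficients with the induction hypothesis
      have hIH : ∀ t ∈ Finset.range (m - j),
          ((j : ℚ) * c) ^ (t + 1) * (((t + 1).factorial : ℚ))⁻¹ *
            PowerSeries.coeff (m - j) (T ^ (q * (t + 1)))
          = ((j : ℚ) * c) ^ (t + 1) * (((t + 1).factorial : ℚ))⁻¹ *
            acoef q (m - j) (q * (t + 1)) := by
        intro t _
        rw [IH (m - j) (by omega) (q * (t + 1)) (Nat.mul_pos (by omega) t.succ_pos)]
      rw [Finset.sum_congr rfl hIH]
      by_cases hdvd : q ∣ (m - j)
      · -- main case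
        set s : ℕ := (m - j) / q with hsdef
        have hN : m - j = q * s := (Nat.mul_div_cancel' hdvd).symm
        have hs1 : 1 ≤ s := by
          rcases Nat.eq_zero_or_pos s with h | h
          · rw [h, Nat.mul_zero] at hN
            omega
          · exact h
        have hq0 : 0 < q := by omega
        have hsN : s ≤ m - j := by
          rw [hN]
          exact Nat.le_mul_of_pos_left s hq0
        rw [← Finset.sum_subset (Finset.range_subset_range.mpr hsN) (by
          intro t ht hts
          rw [Finset.mem_range, not_lt] at hts
          rw [acoef, if_neg, mul_zero]
          rintro ⟨-, h2⟩
          rw [hN] at h2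
          have := Nat.le_of_mul_le_mul_left h2 hq0
          omega)]
        have hNne : (((m - j : ℕ)) : ℚ) ≠ 0 := Nat.cast_ne_zero.mpr hN0
        have hterm : ∀ t ∈ Finset.range s,
            ((j : ℚ) * c) ^ (t + 1) * (((t + 1).factorial : ℚ))⁻¹ *
              acoef q (m - j) (q * (t + 1))
            = (((s - 1).choose t : ℚ) * (j : ℚ) ^ (t + 1) *
                (((m - j : ℕ)) : ℚ) ^ (s - 1 - t)) *
              (c ^ s * ((s.factorial : ℚ))⁻¹) := by
          intro t ht
          rw [Finset.mem_range] at ht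
          have hle : q * (t + 1) ≤ m - j := by
            rw [hN]
            exact Nat.mul_le_mul_left q (by omega)
          have hsub : m - j - q * (t + 1) = q * (s - 1 - t) := by
            rw [hN, ← Nat.mul_sub]
            congr 1
            omega
          have hdvd2 : q ∣ (m - j - q * (t + 1)) := hsub ▸ dvd_mul_right q _
          have hdiv : (m - j - q * (t + 1)) / q = s - 1 - t := by
            rw [hsub, Nat.mul_div_cancel_left _ hq0]
          rw [acoef, if_pos ⟨hdvd2, hle⟩, hdiv]
          rw [show ((((s - 1 - t : ℕ)) : ℤ) - 1)
              = ((s - 1 - t : ℕ) : ℤ) - (1 : ℤ) from rfl,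
            zpow_sub₀ hNne, zpow_one, zpow_natCast]
          have hcast : (((q * (t + 1) : ℕ)) : ℚ) = (q : ℚ) * ((t : ℚ) + 1) := by
            push_cast
            ring
          have hP : (((m - j : ℕ)) : ℚ) = (q : ℚ) * (s : ℚ) := by
            rw [hN]
            push_cast
            ring
          have hcpow : c ^ (t + 1) * c ^ (s - 1 - t) = c ^ s := by
            rw [← pow_add]
            congr 1
            omega
          have hchoose : (((s - 1).choose t : ℕ) : ℚ)
              = ((s - 1).factorial : ℚ) / ((t.factorial : ℚ) * (((s - 1 - t).factorial : ℚ))) := by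
            rw [Nat.cast_choose ℚ (by omega : t ≤ s - 1)]
          have hsfac : (s.factorial : ℚ) = (s : ℚ) * ((s - 1).factorial : ℚ) := by
            rw [← Nat.mul_factorial_pred (by omega : s ≠ 0)]
            push_cast
            ring
          have htfac : ((t + 1).factorial : ℚ) = ((t : ℚ) + 1) * (t.factorial : ℚ) := by
            rw [Nat.factorial_succ]
            push_cast
            ring
          have hfacne : ∀ n : ℕ, ((n.factorial : ℕ) : ℚ) ≠ 0 := fun n =>
            Nat.cast_ne_zero.mpr (Nat.factorial_ne_zero n)
          have hqne : (q : ℚ) ≠ 0 := Nat.cast_ne_zero.mpr (by omega)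
          have hsne : (s : ℚ) ≠ 0 := Nat.cast_ne_zero.mpr (by omega)
          have htne : ((t : ℚ) + 1) ≠ 0 := by positivity
          rw [mul_pow, hcast, hchoose, htfac, ← hc, ← hcpow, hsfac, hP]
          field_simp
        rw [Finset.sum_congr rfl hterm, ← Finset.sum_mul,
          show Finset.range s = Finset.range ((s - 1) + 1) from by
            congr 1
            omega,
          key_binom]
        rw [acoef, if_pos ⟨hdvd, hjm⟩, ← hsdef, ← hc]
        have hjm' : ((j : ℚ) + ((m - j : ℕ) : ℚ)) = (m : ℚ) := by
          rw [Nat.cast_sub hjm]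
          ring
        rw [hjm']
        rw [show ((s : ℕ) : ℤ) - 1 = ((s - 1 : ℕ) : ℤ) from by omega, zpow_natCast]
        ring
      · -- not divisible: everything vanishes
        have hz : ∀ t ∈ Finset.range (m - j),
            ((j : ℚ) * c) ^ (t + 1) * (((t + 1).factorial : ℚ))⁻¹ *
              acoef q (m - j) (q * (t + 1)) = 0 := by
          intro t _
          have : acoef q (m - j) (q * (t + 1)) = 0 := by
            rw [acoef, if_neg]
            rintro ⟨h1, h2⟩
            exact hdvd (by
              have h3 := dvd_add h1 (dvd_mul_right q (t + 1))
              rwa [Nat.sub_add_cancel h2] at h3)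
          rw [this, mul_zero]
        rw [Finset.sum_eq_zero hz, acoef, if_neg (by tauto)]
  · rw [coeff_pow_zero_of_lt hT0 (by omega), acoef, if_neg (by tauto)]

/-- If `T = z·exp(T^{b-1}/(b-1)!)` then for all `k ≥ 0` and `n = s(b-1)+k+1`,
`n!·[z^n](T^{k+1}/(k+1)!) = C(n,k+1)·(k+1)·((n-k-1)!/((b-1)!^s·s!))·n^{s-1}`. -/
theorem forest_egf_coeff (b : ℕ) (hb : 2 ≤ b) (T : PowerSeries ℚ)
    (hT : T = PowerSeries.X *
      pscomp (PowerSeries.exp ℚ)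
        (PowerSeries.C ((Nat.factorial (b - 1) : ℚ))⁻¹ * T ^ (b - 1)))
    (k s n : ℕ) (hn : n = s * (b - 1) + k + 1) :
    (Nat.factorial n : ℚ) *
        PowerSeries.coeff n
          (T ^ (k + 1) * PowerSeries.C ((Nat.factorial (k + 1) : ℚ))⁻¹)
      = (n.choose (k + 1) : ℚ) * (k + 1) * (Nat.factorial (n - k - 1) : ℚ) /
          ((Nat.factorial (b - 1) : ℚ) ^ s * (Nat.factorial s : ℚ)) *
          (n : ℚ) ^ ((s : ℤ) - 1) := by

  have hq1 : 1 ≤ b - 1 := by omega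
  rw [PowerSeries.coeff_mul_C, coeff_T_pow_s6 b hb T hT n (k + 1) (by omega)]
  have hle : k + 1 ≤ n := by omega
  have hsub : n - (k + 1) = s * (b - 1) := by omega
  have hdvd : (b - 1) ∣ n - (k + 1) := hsub ▸ dvd_mul_left _ _
  have hdiv : (n - (k + 1)) / (b - 1) = s := by
    rw [hsub, Nat.mul_div_cancel _ (by omega)]
  rw [acoef, if_pos ⟨hdvd, hle⟩, hdiv]
  have hnk1 : n - k - 1 = n - (k + 1) := by omega
  rw [Nat.cast_choose ℚ hle, hnk1]
  have hfacne : ∀ i : ℕ, ((i.factorial : ℕ) : ℚ) ≠ 0 := fun i =>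
    Nat.cast_ne_zero.mpr (Nat.factorial_ne_zero i)
  have hbfacpow : ((Nat.factorial (b - 1) : ℚ)) ^ s ≠ 0 := pow_ne_zero s (hfacne _)
  rw [inv_pow]
  push_cast
  field_simp
end
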